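/- arXiv:1709.03857 — 6 statements merged into one kernel-verified Lean document; each statement's English description precedes it below -/
import Mathlib

section
/- Let p be a prime, let G be a finite semi-extraspecial p-group, and let N be a proper subgroup of G' (note N is normal in G since G' = Z(G)). Then the quotient group G/N is semi-extraspecial. -/
/-- A finite `p`-group is extraspecial if it is nonabelian, its derived subgroup,
center and Frattini subgroup coincide, and its center has order `p`. -/
def IsExtraspecial (p : ℕ) (G : Type*) [Group G] : Prop :=
  (∃ a b : G, a * b ≠ b * a) ∧
  commutator G = Subgroup.center G ∧
  Subgroup.center G = frattini G ∧
  Nat.card (Subgroup.center G) = p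

/-- A `p`-group is semi-extraspecial if for every subgroup `N` of the center of
index `p` in the center (such subgroups are automatically normal in `G`),
the quotient `G ⧸ N` is extraspecial. -/
def IsSemiExtraspecial (p : ℕ) (G : Type*) [Group G] : Prop :=
  ∀ (N : Subgroup G) [N.Normal], N ≤ Subgroup.center G →
    (N.subgroupOf (Subgroup.center G)).index = p → IsExtraspecial p (G ⧸ N)



section Aux

variable {G : Type*} [Group G]

/-- A subgroup contained in the center is normal. -/
theorem aux_normal_of_le_center {H : Subgroup G} (h : H ≤ Subgroup.center G) : H.Normal := by
  refine ⟨fun n hn g => ?_⟩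
  have : g * n = n * g := Subgroup.mem_center_iff.mp (h hn) g
  have : g * n * g⁻¹ = n := by rw [this, mul_inv_cancel_right]
  rwa [this]

/-- In a finite commutative `p`-group, every proper subgroup is contained in a
subgroup of index `p`. -/
theorem aux_exists_index_p {p : ℕ} (hp : p.Prime) {A : Type*} [CommGroup A] [Finite A]
    (hA : IsPGroup p A) {K : Subgroup A} (hK : K ≠ ⊤) :
    ∃ M : Subgroup A, K ≤ M ∧ M.index = p := by
  haveI := Fact.mk hp
  obtain ⟨M, hM, hKM⟩ := (eq_top_or_exists_le_coatom K).resolve_left hK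
  refine ⟨M, hKM, ?_⟩
  have hMtop : M ≠ ⊤ := hM.1
  -- the quotient is nontrivial
  have hidx1 : M.index ≠ 1 := fun h => hMtop (Subgroup.index_eq_one.mp h)
  have hidx0 : M.index ≠ 0 := Subgroup.index_ne_zero_of_finite
  haveI : Nontrivial (A ⧸ M) := by
    rw [← Finite.one_lt_card_iff_nontrivial]
    have : Nat.card (A ⧸ M) = M.index := rfl
    omega
  -- the quotient is simple
  haveI : IsSimpleGroup (A ⧸ M) := by
    constructor
    intro P _
    have hMP : M ≤ P.comap (QuotientGroup.mk' M) := by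
      intro x hx
      have : QuotientGroup.mk' M x = 1 := (QuotientGroup.eq_one_iff x).mpr hx
      simp only [Subgroup.mem_comap, this]
      exact P.one_mem
    rcases eq_or_lt_of_le hMP with h | h
    · left
      have : P = Subgroup.map (QuotientGroup.mk' M) (P.comap (QuotientGroup.mk' M)) :=
        (Subgroup.map_comap_eq_self_of_surjective (QuotientGroup.mk'_surjective M) P).symm
      rw [this, ← h, Subgroup.map_eq_bot_iff, QuotientGroup.ker_mk']
    · right
      have htop : P.comap (QuotientGroup.mk' M) = ⊤ := hM.2 _ h
      have : P = Subgroup.map (QuotientGroup.mk' M) (P.comap (QuotientGroup.mk' M)) :=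
        (Subgroup.map_comap_eq_self_of_surjective (QuotientGroup.mk'_surjective M) P).symm
      rw [this, htop, Subgroup.map_top_of_surjective _ (QuotientGroup.mk'_surjective M)]
  -- so the quotient has prime order, which must be `p`
  have hprime : (Nat.card (A ⧸ M)).Prime := IsSimpleGroup.prime_card
  obtain ⟨n, hn⟩ := IsPGroup.iff_card.mp (hA.to_quotient M)
  have hdvd : p ∣ Nat.card (A ⧸ M) := by
    rcases Nat.eq_zero_or_pos n with rfl | hn0
    · simp [hn] at hprime
      exact absurd hprime Nat.not_prime_one
    · exact hn ▸ dvd_pow_self p hn0.ne'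
  have : p = Nat.card (A ⧸ M) := (Nat.prime_dvd_prime_iff_eq hp hprime).mp hdvd
  exact this.symm

/-- Image of the center in a quotient is central. -/
theorem aux_map_center_le (N : Subgroup G) [N.Normal] :
    (Subgroup.center G).map (QuotientGroup.mk' N) ≤ Subgroup.center (G ⧸ N) := by
  rintro _ ⟨x, hx, rfl⟩
  rw [Subgroup.mem_center_iff]
  intro q
  induction q using QuotientGroup.induction_on with
  | H z =>
    show ((z : G ⧸ N) * (x : G ⧸ N)) = (x : G ⧸ N) * (z : G ⧸ N)
    rw [← QuotientGroup.mk_mul, ← QuotientGroup.mk_mul,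
      Subgroup.mem_center_iff.mp hx z]

end Aux

section Transfer

/-- Extraspecialness transfers along isomorphisms. -/
theorem aux_isExtraspecial_of_mulEquiv {p : ℕ} {H K : Type*} [Group H] [Group K]
    (e : H ≃* K) (h : IsExtraspecial p H) : IsExtraspecial p K := by
  obtain ⟨⟨a, b, hab⟩, h1, h2, h3⟩ := h
  have hcenter : (Subgroup.center H).map e.toMonoidHom = Subgroup.center K := by
    ext k
    constructor
    · rintro ⟨x, hx, rfl⟩
      rw [Subgroup.mem_center_iff]
      intro g
      have := Subgroup.mem_center_iff.mp hx (e.symm g)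
      calc g * e x = e (e.symm g * x) := by rw [map_mul, e.apply_symm_apply]
        _ = e (x * e.symm g) := by rw [this]
        _ = e x * g := by rw [map_mul, e.apply_symm_apply]
    · intro hk
      refine ⟨e.symm k, Subgroup.mem_center_iff.mpr fun g => e.injective ?_, e.apply_symm_apply k⟩
      rw [map_mul, map_mul, e.apply_symm_apply]
      exact Subgroup.mem_center_iff.mp hk (e g)
  have hcommut : (commutator H).map e.toMonoidHom = commutator K := by
    rw [commutator_def, commutator_def, Subgroup.map_commutator,
      Subgroup.map_top_of_surjective _ e.surjective]
  have hfr : (frattini H).map e.toMonoidHom = frattini K := by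
    apply le_antisymm
    · rw [Subgroup.map_le_iff_le_comap]
      exact frattini_le_comap_frattini_of_surjective e.surjective
    · intro x hx
      refine ⟨e.symm x, ?_, e.apply_symm_apply x⟩
      exact frattini_le_comap_frattini_of_surjective
        (φ := e.symm.toMonoidHom) e.symm.surjective hx
  refine ⟨⟨e a, e b, fun hc => hab (e.injective (by rw [map_mul, map_mul]; exact hc))⟩, ?_, ?_, ?_⟩
  · rw [← hcommut, h1, hcenter]
  · rw [← hcenter, ← hfr, h2]
  · rw [← hcenter]
    have := Nat.card_congr
      ((Subgroup.center H).equivMapOfInjective e.toMonoidHom e.injective).toEquiv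
    rw [← this, h3]

end Transfer

section Main

variable {p : ℕ} {G : Type*} [Group G] [Finite G]

/-- The center of the quotient of a semi-extraspecial group by an index-`p`
subgroup of the center is the image of the center. -/
theorem aux_center_quotient (hse : IsSemiExtraspecial p G)
    {M : Subgroup G} [M.Normal] (hM : M ≤ Subgroup.center G)
    (hidx : (M.subgroupOf (Subgroup.center G)).index = p) :
    Subgroup.center (G ⧸ M) = (Subgroup.center G).map (QuotientGroup.mk' M) := by
  obtain ⟨-, -, -, hcard⟩ := hse M hM hidx
  have hle := aux_map_center_le M
  have hcard2 : Nat.card ((Subgroup.center G).map (QuotientGroup.mk' M)) = p := by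
    rw [← MonoidHom.restrict_range]
    rw [← Nat.card_congr
      (QuotientGroup.quotientKerEquivRange
        ((QuotientGroup.mk' M).domRestrict (Subgroup.center G))).toEquiv]
    rw [MonoidHom.ker_domRestrict, QuotientGroup.ker_mk']
    exact hidx
  exact (Subgroup.eq_of_le_of_card_ge hle (by rw [hcard, hcard2])).symm

/-- A semi-extraspecial group (with nontrivial commutator) is special:
its commutator subgroup equals its center. -/
theorem aux_commutator_eq_center (hp : p.Prime) (hpG : IsPGroup p G)
    (hse : IsSemiExtraspecial p G) [Nontrivial G] :
    commutator G = Subgroup.center G := by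
  haveI := Fact.mk hp
  haveI : Nontrivial (Subgroup.center G) := hpG.center_nontrivial
  have hZp : IsPGroup p (Subgroup.center G) := hpG.to_subgroup _
  have key : ∀ M : Subgroup G, M ≤ Subgroup.center G →
      (M.subgroupOf (Subgroup.center G)).index = p →
      commutator G ⊔ M = Subgroup.center G := by
    intro M hM hidx
    haveI := aux_normal_of_le_center hM
    have hc := aux_center_quotient hse hM hidx
    obtain ⟨-, hcc, -, -⟩ := hse M hM hidx
    have hmapc : (commutator G).map (QuotientGroup.mk' M) = commutator (G ⧸ M) := by
      rw [commutator_def, commutator_def, Subgroup.map_commutator,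
        Subgroup.map_top_of_surjective _ (QuotientGroup.mk'_surjective M)]
    have heq : (commutator G).map (QuotientGroup.mk' M)
        = (Subgroup.center G).map (QuotientGroup.mk' M) := by
      rw [hmapc, hcc, hc]
    have := congrArg (Subgroup.comap (QuotientGroup.mk' M)) heq
    rwa [Subgroup.comap_map_eq, Subgroup.comap_map_eq, QuotientGroup.ker_mk',
      sup_eq_left.mpr hM] at this
  -- first, get one such M, to show `commutator G ≤ center G`
  obtain ⟨M₀', hbot, hidx₀⟩ := (open scoped IsMulCommutative in aux_exists_index_p hp hZp (K := ⊥) bot_ne_top)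
  have hcle : commutator G ≤ Subgroup.center G := by
    have hM₀le : Subgroup.map (Subgroup.center G).subtype M₀' ≤ Subgroup.center G :=
      Subgroup.map_subtype_le M₀'
    have hidx₀' : ((Subgroup.map (Subgroup.center G).subtype M₀').subgroupOf
        (Subgroup.center G)).index = p := by
      rw [Subgroup.subgroupOf, Subgroup.comap_map_eq_self_of_injective
        (Subgroup.center G).subtype_injective]
      exact hidx₀
    exact le_sup_left.trans (key _ hM₀le hidx₀').le
  -- now the reverse inclusion
  by_contra hne
  have hlt : commutator G < Subgroup.center G := lt_of_le_of_ne hcle (fun h => hne h)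
  have hKne : (commutator G).subgroupOf (Subgroup.center G) ≠ ⊤ := by
    intro h
    rw [Subgroup.subgroupOf_eq_top] at h
    exact hlt.not_ge h
  obtain ⟨M', hM'ge, hidx'⟩ := (open scoped IsMulCommutative in aux_exists_index_p hp hZp hKne)
  set M := Subgroup.map (Subgroup.center G).subtype M' with hMdef
  have hMle : M ≤ Subgroup.center G := Subgroup.map_subtype_le M'
  have hidxM : (M.subgroupOf (Subgroup.center G)).index = p := by
    rw [hMdef, Subgroup.subgroupOf, Subgroup.comap_map_eq_self_of_injective
      (Subgroup.center G).subtype_injective]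
    exact hidx'
  have hcM : commutator G ≤ M := by
    intro x hx
    exact ⟨⟨x, hcle hx⟩, hM'ge hx, rfl⟩
  have := key M hMle hidxM
  rw [sup_eq_right.mpr hcM] at this
  rw [this] at hidxM
  rw [Subgroup.subgroupOf_self, Subgroup.index_top] at hidxM
  exact hp.ne_one hidxM.symm

end Main

/-- A quotient of a finite semi-extraspecial `p`-group by a proper subgroup of its
derived subgroup (such a subgroup is normal since `G' = Z(G)`) is semi-extraspecial. -/
theorem semiExtraspecial_quotient {p : ℕ} (hp : p.Prime) {G : Type*} [Group G] [Finite G]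
    (hpG : IsPGroup p G) (hse : IsSemiExtraspecial p G)
    (N : Subgroup G) [N.Normal] (hN : N < commutator G) :
    IsSemiExtraspecial p (G ⧸ N) := by
  classical
  -- G is nontrivial
  obtain ⟨g₀, hg₀c, hg₀N⟩ := SetLike.exists_of_lt hN
  haveI : Nontrivial G := ⟨⟨g₀, 1, fun h => hg₀N (h ▸ N.one_mem)⟩⟩
  have hcomm : commutator G = Subgroup.center G := aux_commutator_eq_center hp hpG hse
  have hNlt : N < Subgroup.center G := hcomm ▸ hN
  have hZp : IsPGroup p (Subgroup.center G) := hpG.to_subgroup _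
  -- an index-p subgroup M of the center containing N
  have hKne : N.subgroupOf (Subgroup.center G) ≠ ⊤ := by
    intro h
    rw [Subgroup.subgroupOf_eq_top] at h
    exact hNlt.not_ge h
  obtain ⟨M', hNM', hidx'⟩ := (open scoped IsMulCommutative in aux_exists_index_p hp hZp hKne)
  set M := Subgroup.map (Subgroup.center G).subtype M' with hMdef
  have hMle : M ≤ Subgroup.center G := Subgroup.map_subtype_le M'
  haveI : M.Normal := aux_normal_of_le_center hMle
  have hidxM : (M.subgroupOf (Subgroup.center G)).index = p := by
    rw [hMdef, Subgroup.subgroupOf, Subgroup.comap_map_eq_self_of_injective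
      (Subgroup.center G).subtype_injective]
    exact hidx'
  have hNM : N ≤ M := by
    intro x hx
    exact ⟨⟨x, hNlt.le hx⟩, hNM' hx, rfl⟩
  have hcQ := aux_center_quotient hse hMle hidxM
  -- key lemma: anything central mod N is central
  open scoped commutatorElement in
  have hKL : ∀ g : G, ((QuotientGroup.mk' N) g ∈ Subgroup.center (G ⧸ N)) →
      g ∈ Subgroup.center G := by
    intro g hg
    have hgc : ∀ x : G, ⁅g, x⁆ ∈ N := by
      intro x
      have hcom : (QuotientGroup.mk' N) x * (QuotientGroup.mk' N) g
          = (QuotientGroup.mk' N) g * (QuotientGroup.mk' N) x :=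
        Subgroup.mem_center_iff.mp hg _
      have : (QuotientGroup.mk' N) ⁅g, x⁆ = 1 := by
        rw [map_commutatorElement]
        exact commutatorElement_eq_one_iff_mul_comm.mpr hcom.symm
      rwa [← MonoidHom.mem_ker, QuotientGroup.ker_mk'] at this
    have hcent : (QuotientGroup.mk' M) g ∈ Subgroup.center (G ⧸ M) := by
      rw [Subgroup.mem_center_iff]
      intro q
      induction q using QuotientGroup.induction_on with
      | H x =>
        have hxgM : ⁅x, g⁆ ∈ M := by
          have h1 : ⁅g, x⁆ ∈ M := hNM (hgc x)
          have h2 := M.inv_mem h1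
          rwa [commutatorElement_inv] at h2
        have : (QuotientGroup.mk' M) ⁅x, g⁆ = 1 := (QuotientGroup.eq_one_iff _).mpr hxgM
        rw [map_commutatorElement] at this
        exact commutatorElement_eq_one_iff_mul_comm.mp this
    rw [hcQ] at hcent
    obtain ⟨z, hz, hzg⟩ := hcent
    have hzM : z⁻¹ * g ∈ M := by
      have : (QuotientGroup.mk' M) (z⁻¹ * g) = 1 := by
        rw [map_mul, map_inv, hzg, inv_mul_cancel]
      rwa [← MonoidHom.mem_ker, QuotientGroup.ker_mk'] at this
    have : g = z * (z⁻¹ * g) := by group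
    rw [this]
    exact (Subgroup.center G).mul_mem hz (hMle hzM)
  -- the center of the quotient is the image of the center
  have hcN : Subgroup.center (G ⧸ N) = (Subgroup.center G).map (QuotientGroup.mk' N) := by
    apply le_antisymm
    · intro q hq
      induction q using QuotientGroup.induction_on with
      | H x => exact ⟨x, hKL x hq, rfl⟩
    · exact aux_map_center_le N
  -- now prove semi-extraspecialness of the quotient
  intro P hPn hPle hPidx
  set Q := P.comap (QuotientGroup.mk' N) with hQdef
  have hQle : Q ≤ Subgroup.center G := fun x hx => hKL x (hPle hx)
  haveI : Q.Normal := aux_normal_of_le_center hQle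
  have hNQ : N ≤ Q := by
    intro x hx
    have : (QuotientGroup.mk' N) x = 1 := (QuotientGroup.eq_one_iff x).mpr hx
    simp only [hQdef, Subgroup.mem_comap, this]
    exact P.one_mem
  have hPQ : P = Q.map (QuotientGroup.mk' N) :=
    (Subgroup.map_comap_eq_self_of_surjective (QuotientGroup.mk'_surjective N) P).symm
  -- transfer the index
  have hψmem : ∀ x : Subgroup.center G,
      ((QuotientGroup.mk' N).domRestrict (Subgroup.center G)) x ∈ Subgroup.center (G ⧸ N) := by
    intro x
    rw [hcN]
    exact ⟨(x : G), x.2, rfl⟩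
  set ψ : Subgroup.center G →* Subgroup.center (G ⧸ N) :=
    ((QuotientGroup.mk' N).domRestrict (Subgroup.center G)).codRestrict
      (Subgroup.center (G ⧸ N)) hψmem with hψdef
  have hψsurj : Function.Surjective ψ := by
    rintro ⟨q, hq⟩
    rw [hcN] at hq
    obtain ⟨x, hx, rfl⟩ := hq
    exact ⟨⟨x, hx⟩, rfl⟩
  have hcomapψ : Q.subgroupOf (Subgroup.center G)
      = (P.subgroupOf (Subgroup.center (G ⧸ N))).comap ψ := by
    ext x
    simp only [Subgroup.mem_subgroupOf, Subgroup.mem_comap, hQdef, hψdef,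
      MonoidHom.codRestrict_apply, MonoidHom.domRestrict_apply]
  have hQidx : (Q.subgroupOf (Subgroup.center G)).index = p := by
    rw [hcomapψ, Subgroup.index_comap_of_surjective _ hψsurj]
    exact hPidx
  have hext : IsExtraspecial p (G ⧸ Q) := hse Q hQle hQidx
  haveI : (Q.map (QuotientGroup.mk' N)).Normal := hPQ ▸ hPn
  exact aux_isExtraspecial_of_mulEquiv
    ((QuotientGroup.quotientMulEquivOfEq hPQ).trans
      (QuotientGroup.quotientQuotientEquivQuotient N Q hNQ)).symm hext
end

section
/- Let p be a prime and let G be a finite semi-extraspecial p-group. Then both the quotient group G/G' and the subgroup G' are elementary abelian p-groups; that is, each is abelian and every element x satisfies x^p = 1. -/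
/-- A group is elementary abelian for the prime `p` if it is abelian and every
element `x` satisfies `x ^ p = 1`. -/
def IsElementaryAbelian (p : ℕ) (G : Type*) [Group G] : Prop :=
  (∀ x y : G, x * y = y * x) ∧ ∀ x : G, x ^ p = 1

open scoped commutatorElement

/-- If the commutator `⁅x, y⁆` is central and `x ^ n` is central, then `⁅x, y⁆ ^ n = 1`. -/
lemma aux_commutator_pow {G : Type*} [Group G] {x y : G} {n : ℕ}
    (hc : ⁅x, y⁆ ∈ Subgroup.center G) (hx : x ^ n ∈ Subgroup.center G) :
    ⁅x, y⁆ ^ n = 1 := by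
  have hxa : x = ⁅x, y⁆ * (y * x * y⁻¹) := by rw [commutatorElement_def]; group
  have hcomm : Commute ⁅x, y⁆ (y * x * y⁻¹) := (Subgroup.mem_center_iff.mp hc _).symm
  have h1 : x ^ n = ⁅x, y⁆ ^ n * (y * x ^ n * y⁻¹) := by
    calc x ^ n = (⁅x, y⁆ * (y * x * y⁻¹)) ^ n := by rw [← hxa]
    _ = ⁅x, y⁆ ^ n * (y * x * y⁻¹) ^ n := hcomm.mul_pow n
    _ = ⁅x, y⁆ ^ n * (y * x ^ n * y⁻¹) := by rw [conj_pow]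
  have h2 : y * x ^ n * y⁻¹ = x ^ n := by
    rw [Subgroup.mem_center_iff.mp hx y]; group
  rw [h2] at h1
  exact right_eq_mul.mp h1

/-- In a finite `p`-group, the `p`-th power of any element lies in the Frattini subgroup. -/
lemma aux_pow_mem_frattini {p : ℕ} (hp : p.Prime) {E : Type*} [Group E] [Finite E]
    (hE : IsPGroup p E) (x : E) : x ^ p ∈ frattini E := by
  have hfact : Fact p.Prime := ⟨hp⟩
  have hnil : Group.IsNilpotent E := hE.isNilpotent
  have hcoatom : ∀ M : Subgroup E, IsCoatom M → M.Normal :=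
    ((isNilpotent_of_finite_tfae (G := E)).out 0 2).mp hnil
  have key : ∀ M : Subgroup E, IsCoatom M → x ^ p ∈ M := by
    intro M hM
    haveI := hcoatom M hM
    haveI : Nontrivial (E ⧸ M) := by
      obtain ⟨g, -, hg⟩ := SetLike.exists_of_lt (lt_top_iff_ne_top.mpr hM.1)
      exact ⟨⟨QuotientGroup.mk g, 1, fun h => hg ((QuotientGroup.eq_one_iff g).mp h)⟩⟩
    have hQ : IsPGroup p (E ⧸ M) := hE.to_quotient M
    obtain ⟨k, hk0, hcard⟩ := hQ.nontrivial_iff_card.mp inferInstance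
    have hdvd : p ∣ Nat.card (E ⧸ M) := by
      rw [hcard]; exact dvd_pow_self p hk0.ne'
    obtain ⟨g, hg⟩ := exists_prime_orderOf_dvd_card' p hdvd
    have hle : M ≤ Subgroup.comap (QuotientGroup.mk' M) (Subgroup.zpowers g) := by
      conv_lhs => rw [← QuotientGroup.ker_mk' M]
      exact Subgroup.ker_le_comap _ _
    have hne : M ≠ Subgroup.comap (QuotientGroup.mk' M) (Subgroup.zpowers g) := by
      intro h
      obtain ⟨a, ha⟩ := QuotientGroup.mk'_surjective M g
      have haM : a ∈ M := by
        rw [h]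
        simp only [Subgroup.mem_comap, ha]
        exact Subgroup.mem_zpowers g
      have hg1 : g = 1 := by rw [← ha]; exact (QuotientGroup.eq_one_iff a).mpr haM
      rw [hg1, orderOf_one] at hg
      exact hp.one_lt.ne' hg.symm
    have htop := hM.2 _ (lt_of_le_of_ne hle hne)
    have hzp : Subgroup.zpowers g = ⊤ := by
      have := congrArg (Subgroup.map (QuotientGroup.mk' M)) htop
      rwa [Subgroup.map_comap_eq_self_of_surjective (QuotientGroup.mk'_surjective M),
        Subgroup.map_top_of_surjective _ (QuotientGroup.mk'_surjective M)] at this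
    have hcardQ : Nat.card (E ⧸ M) = p := by
      rw [← hg, ← Nat.card_zpowers, hzp, Subgroup.card_top]
    have hone : ((QuotientGroup.mk' M) (x ^ p)) = 1 := by
      rw [map_pow, ← hcardQ]
      exact pow_card_eq_one'
    exact (QuotientGroup.eq_one_iff (x ^ p)).mp hone
  rw [frattini, Order.radical]
  exact Subgroup.mem_iInf.mpr fun M => Subgroup.mem_iInf.mpr fun hM => key M hM

/-- Any proper central subgroup of a finite `p`-group is contained in a normal central
subgroup of relative index `p` in the center. -/
lemma aux_exists_N {p : ℕ} (hp : p.Prime) {G : Type*} [Group G] [Finite G]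
    (hpG : IsPGroup p G) (K : Subgroup G) (hK : K ≤ Subgroup.center G)
    (hne : K ≠ Subgroup.center G) :
    ∃ N : Subgroup G, N.Normal ∧ N ≤ Subgroup.center G ∧ K ≤ N ∧
      (N.subgroupOf (Subgroup.center G)).index = p := by
  have hfact : Fact p.Prime := ⟨hp⟩
  have hKs : K.subgroupOf (Subgroup.center G) ≠ ⊤ := by
    intro h
    exact hne (le_antisymm hK (Subgroup.subgroupOf_eq_top.mp h))
  haveI : (K.subgroupOf (Subgroup.center G)).Normal := by
    refine ⟨fun n hn g => ?_⟩
    have hgn : g * n * g⁻¹ = n := by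
      refine Subtype.ext ?_
      push_cast
      rw [Subgroup.mem_center_iff.mp n.2 g]
      group
    rwa [hgn]
  haveI : Nontrivial ((Subgroup.center G) ⧸ K.subgroupOf (Subgroup.center G)) := by
    obtain ⟨z, hz⟩ : ∃ z, z ∉ K.subgroupOf (Subgroup.center G) := by
      by_contra h
      push_neg at h
      exact hKs (top_unique fun z _ => h z)
    exact ⟨⟨QuotientGroup.mk z, 1, fun h => hz ((QuotientGroup.eq_one_iff z).mp h)⟩⟩
  have hQp : IsPGroup p ((Subgroup.center G) ⧸ K.subgroupOf (Subgroup.center G)) :=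
    (hpG.to_subgroup (Subgroup.center G)).to_quotient _
  obtain ⟨k, hk0, hcard⟩ := hQp.nontrivial_iff_card.mp inferInstance
  obtain ⟨W, hW⟩ := Sylow.exists_subgroup_card_pow_prime (n := k - 1) p
    (by rw [hcard]; exact pow_dvd_pow p (Nat.sub_le k 1))
  have hWidx : W.index = p := by
    have h1 := W.card_mul_index
    rw [hW, hcard] at h1
    have h2 : p ^ (k - 1) * W.index = p ^ (k - 1) * p := by
      rw [h1, ← pow_succ, Nat.sub_add_cancel hk0]
    exact Nat.eq_of_mul_eq_mul_left (pow_pos hp.pos _) h2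
  set M := Subgroup.comap (QuotientGroup.mk' (K.subgroupOf (Subgroup.center G))) W with hM
  have hMidx : M.index = p := by
    rw [hM, W.index_comap_of_surjective (QuotientGroup.mk'_surjective _), hWidx]
  have hKM : K.subgroupOf (Subgroup.center G) ≤ M := by
    rw [hM]
    conv_lhs => rw [← QuotientGroup.ker_mk' (K.subgroupOf (Subgroup.center G))]
    exact Subgroup.ker_le_comap _ _
  refine ⟨M.map (Subgroup.center G).subtype, ?_, Subgroup.map_subtype_le M, ?_, ?_⟩
  · refine ⟨fun n hn g => ?_⟩
    have hnZ : n ∈ Subgroup.center G := Subgroup.map_subtype_le M hn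
    have hgn : g * n * g⁻¹ = n := by
      rw [Subgroup.mem_center_iff.mp hnZ g]; group
    rwa [hgn]
  · intro x hx
    exact ⟨⟨x, hK hx⟩, hKM (by simpa [Subgroup.mem_subgroupOf] using hx), rfl⟩
  · have heq : (M.map (Subgroup.center G).subtype).subgroupOf (Subgroup.center G) = M :=
      Subgroup.comap_map_eq_self_of_injective (Subgroup.center G).subtype_injective M
    rw [heq, hMidx]

/-- If `G` is a finite semi-extraspecial `p`-group, then `G ⧸ G'` and `G'` are both
elementary abelian `p`-groups. -/
theorem semiExtraspecial_elementaryAbelian {p : ℕ} (hp : p.Prime) {G : Type*} [Group G]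
    [Finite G] (hpG : IsPGroup p G) (hse : IsSemiExtraspecial p G) :
    IsElementaryAbelian p (G ⧸ commutator G) ∧ IsElementaryAbelian p (commutator G) := by
  have hfact : Fact p.Prime := ⟨hp⟩
  by_cases hG : Subsingleton G
  · haveI : Subsingleton (G ⧸ commutator G) :=
      (QuotientGroup.mk'_surjective (commutator G)).subsingleton
    haveI : Subsingleton (commutator G) := ⟨fun a b => Subtype.ext (Subsingleton.elim _ _)⟩
    exact ⟨⟨fun x y => Subsingleton.elim _ _, fun x => Subsingleton.elim _ _⟩,
      ⟨fun x y => Subsingleton.elim _ _, fun x => Subsingleton.elim _ _⟩⟩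
  haveI : Nontrivial G := not_subsingleton_iff_nontrivial.mp hG
  haveI : Nontrivial (Subgroup.center G) := hpG.center_nontrivial
  -- Key consequences of extraspeciality of `G ⧸ N`.
  have key : ∀ (N : Subgroup G) (_ : N.Normal), N ≤ Subgroup.center G →
      (N.subgroupOf (Subgroup.center G)).index = p →
      commutator G ≤ Subgroup.center G ∧ Subgroup.center G ≤ commutator G ⊔ N ∧
      ∀ x : G, x ^ p ∈ Subgroup.center G := by
    intro N hN hNZ hidx
    haveI := hN
    obtain ⟨-, hcomm, hcf, hcard⟩ := hse N hNZ hidx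
    set f := QuotientGroup.mk' N with hf
    have hfs : Function.Surjective f := QuotientGroup.mk'_surjective N
    have h1 : Subgroup.map f (Subgroup.center G) ≤ Subgroup.center (G ⧸ N) := by
      rintro _ ⟨z, hz, rfl⟩
      rw [Subgroup.mem_center_iff]
      intro q
      obtain ⟨g, rfl⟩ := hfs q
      rw [← map_mul, ← map_mul, Subgroup.mem_center_iff.mp hz g]
    have h2 : Nat.card (Subgroup.map f (Subgroup.center G)) = p := by
      have e1 : (f.comp (Subgroup.center G).subtype).range =
          Subgroup.map f (Subgroup.center G) := by
        rw [MonoidHom.range_comp, Subgroup.range_subtype]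
      have e2 : (f.comp (Subgroup.center G).subtype).ker =
          N.subgroupOf (Subgroup.center G) := by
        rw [← MonoidHom.comap_ker, hf, QuotientGroup.ker_mk']
        rfl
      calc Nat.card (Subgroup.map f (Subgroup.center G))
          = Nat.card (f.comp (Subgroup.center G).subtype).range := by rw [e1]
        _ = Nat.card ((Subgroup.center G) ⧸ (f.comp (Subgroup.center G).subtype).ker) :=
            (Nat.card_congr (QuotientGroup.quotientKerEquivRange
              (f.comp (Subgroup.center G).subtype)).toEquiv).symm
        _ = (N.subgroupOf (Subgroup.center G)).index := by rw [e2]; rfl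
        _ = p := hidx
    have h3 : Subgroup.map f (Subgroup.center G) = Subgroup.center (G ⧸ N) := by
      refine Subgroup.eq_of_le_of_card_ge h1 ?_
      rw [h2, hcard]
    have h4 : Subgroup.map f (commutator G) = commutator (G ⧸ N) := by
      rw [commutator_def, commutator_def, Subgroup.map_commutator,
        Subgroup.map_top_of_surjective f hfs]
    have h5 : Subgroup.map f (commutator G) = Subgroup.map f (Subgroup.center G) := by
      rw [h4, hcomm, h3]
    have hkerf : f.ker = N := QuotientGroup.ker_mk' N
    have hsup : Subgroup.center G ⊔ N = Subgroup.center G := sup_eq_left.mpr hNZ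
    have h6 : commutator G ≤ Subgroup.center G := by
      calc commutator G ≤ Subgroup.comap f (Subgroup.map f (commutator G)) :=
            Subgroup.le_comap_map (f := f) _
        _ = Subgroup.comap f (Subgroup.map f (Subgroup.center G)) := by rw [h5]
        _ = Subgroup.center G ⊔ f.ker := by rw [Subgroup.comap_map_eq]
        _ = Subgroup.center G := by rw [hkerf, hsup]
    have h7 : Subgroup.center G ≤ commutator G ⊔ N := by
      calc Subgroup.center G ≤ Subgroup.comap f (Subgroup.map f (Subgroup.center G)) :=
            Subgroup.le_comap_map (f := f) _
        _ = Subgroup.comap f (Subgroup.map f (commutator G)) := by rw [h5]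
        _ = commutator G ⊔ f.ker := by rw [Subgroup.comap_map_eq]
        _ = commutator G ⊔ N := by rw [hkerf]
    have h8 : ∀ x : G, x ^ p ∈ Subgroup.center G := by
      intro x
      have hq : IsPGroup p (G ⧸ N) := hpG.to_quotient N
      have hfr : (f x) ^ p ∈ frattini (G ⧸ N) := aux_pow_mem_frattini hp hq (f x)
      rw [← hcf, ← h3, ← map_pow] at hfr
      have hmem : x ^ p ∈ Subgroup.comap f (Subgroup.map f (Subgroup.center G)) := hfr
      rwa [Subgroup.comap_map_eq, hkerf, hsup] at hmem
    exact ⟨h6, h7, h8⟩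
  have hbotne : (⊥ : Subgroup G) ≠ Subgroup.center G := by
    intro h
    obtain ⟨z, hz⟩ := exists_ne (1 : Subgroup.center G)
    have hzb : (z : G) ∈ (⊥ : Subgroup G) := by rw [h]; exact z.2
    exact hz (Subtype.ext (Subgroup.mem_bot.mp hzb))
  obtain ⟨N₀, hN₀n, hN₀Z, -, hN₀idx⟩ := aux_exists_N hp hpG ⊥ bot_le hbotne
  obtain ⟨hcomZ, -, hpowZ⟩ := key N₀ hN₀n hN₀Z hN₀idx
  have hCeq : commutator G = Subgroup.center G := by
    by_contra hne
    obtain ⟨N, hNn, hNZ, hKN, hNidx⟩ := aux_exists_N hp hpG (commutator G) hcomZ hne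
    obtain ⟨-, h7, -⟩ := key N hNn hNZ hNidx
    have hNZ' : N = Subgroup.center G :=
      le_antisymm hNZ (h7.trans (sup_le hKN le_rfl))
    rw [hNZ', Subgroup.subgroupOf_self, Subgroup.index_top] at hNidx
    exact hp.one_lt.ne' hNidx.symm
  have hpowC : ∀ x : G, x ^ p ∈ commutator G := by
    intro x; rw [hCeq]; exact hpowZ x
  refine ⟨⟨?_, ?_⟩, ⟨?_, ?_⟩⟩
  · intro x y
    obtain ⟨a, rfl⟩ := QuotientGroup.mk'_surjective (commutator G) x
    obtain ⟨b, rfl⟩ := QuotientGroup.mk'_surjective (commutator G) y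
    rw [← map_mul, ← map_mul, QuotientGroup.mk'_apply, QuotientGroup.mk'_apply,
      QuotientGroup.eq]
    have heq : (a * b)⁻¹ * (b * a) = ⁅b⁻¹, a⁻¹⁆ := by
      rw [commutatorElement_def]; group
    rw [heq, commutator_def]
    exact Subgroup.commutator_mem_commutator (Subgroup.mem_top _) (Subgroup.mem_top _)
  · intro x
    obtain ⟨a, rfl⟩ := QuotientGroup.mk'_surjective (commutator G) x
    rw [← map_pow, QuotientGroup.mk'_apply, QuotientGroup.eq_one_iff]
    exact hpowC a
  · intro x y
    have hx : (x : G) ∈ Subgroup.center G := by rw [← hCeq]; exact x.2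
    exact Subtype.ext (Subgroup.mem_center_iff.mp hx y).symm
  · intro z
    have hz2 : (z : G) ^ p = 1 := by
      have hzC : (z : G) ∈ commutator G := z.2
      have hTle : commutator G ≤
          { carrier := {g : G | g ∈ Subgroup.center G ∧ g ^ p = 1}
            one_mem' := ⟨Subgroup.one_mem _, one_pow p⟩
            mul_mem' := fun {a b} ha hb => ⟨Subgroup.mul_mem _ ha.1 hb.1, by
              have hab : Commute a b := (Subgroup.mem_center_iff.mp ha.1 b).symm
              rw [hab.mul_pow, ha.2, hb.2, one_mul]⟩
            inv_mem' := fun {a} ha => ⟨Subgroup.inv_mem _ ha.1, by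
              rw [inv_pow, ha.2, inv_one]⟩ } := by
        rw [commutator_def, Subgroup.commutator_def, Subgroup.closure_le]
        rintro g ⟨x, -, y, -, rfl⟩
        have hcZ : ⁅x, y⁆ ∈ Subgroup.center G := by
          rw [← hCeq, commutator_def]
          exact Subgroup.commutator_mem_commutator (Subgroup.mem_top _) (Subgroup.mem_top _)
        exact ⟨hcZ, aux_commutator_pow hcZ (hpowZ x)⟩
      exact (hTle hzC).2
    refine Subtype.ext ?_
    push_cast
    exact hz2
end

section
/- Let p be a prime and let G be a finite semi-extraspecial p-group with |G : G'| = p^{2a} and |G'| = p^b. Then: (1) every abelian subgroup of G has order at most p^{a+b}; and (2) for every element g ∈ G \ G', the center of the centralizer C_G(g) satisfies p^{b+1} ≤ |Z(C_G(g))| ≤ p^{2b}. -/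
open scoped Pointwise
open scoped commutatorElement
open scoped IsMulCommutative


section Helpers

variable {G : Type*} [Group G]

lemma myNormalOfLeCenter {N : Subgroup G} (h : N ≤ Subgroup.center G) : N.Normal := by
  constructor
  intro n hn g
  have h2 : g * n * g⁻¹ = n := by
    rw [Subgroup.mem_center_iff.mp (h hn) g]; group
  rw [h2]; exact hn

/-- The commutation homomorphism `y ↦ ⁅y, x⁆` when all commutators are central. -/
def psiHom (hc : ∀ x y : G, ⁅x, y⁆ ∈ Subgroup.center G) (x : G) :
    G →* Subgroup.center G where
  toFun y := ⟨⁅y, x⁆, hc y x⟩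
  map_one' := by ext; simp
  map_mul' y y' := by
    ext
    show ⁅y * y', x⁆ = ⁅y, x⁆ * ⁅y', x⁆
    have h1 : ⁅y * y', x⁆ = y * ⁅y', x⁆ * y⁻¹ * ⁅y, x⁆ := by group
    have h2 : y * ⁅y', x⁆ = ⁅y', x⁆ * y := Subgroup.mem_center_iff.mp (hc y' x) y
    rw [h1, h2, mul_inv_cancel_right]
    exact (Subgroup.mem_center_iff.mp (hc y' x) _).symm

lemma psiHom_ker (hc : ∀ x y : G, ⁅x, y⁆ ∈ Subgroup.center G) (x : G) :
    (psiHom hc x).ker = Subgroup.centralizer {x} := by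
  ext y
  rw [MonoidHom.mem_ker, Subgroup.mem_centralizer_iff]
  constructor
  · intro h h' hh'
    rw [Set.mem_singleton_iff] at hh'
    have h1 : (⁅y, x⁆ : G) = 1 := by
      rw [Subtype.ext_iff] at h; exact h
    rw [hh']
    exact (commutatorElement_eq_one_iff_mul_comm.mp h1).symm
  · intro h
    have hx := h x (Set.mem_singleton x)
    apply Subtype.ext
    show (⁅y, x⁆ : G) = 1
    exact commutatorElement_eq_one_iff_mul_comm.mpr hx.symm

lemma card_dom_eq_mul {M N : Type*} [Group M] [Group N] (f : M →* N) :
    Nat.card M = Nat.card f.ker * Nat.card f.range := by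
  rw [Subgroup.card_eq_card_quotient_mul_card_subgroup f.ker,
    Nat.card_congr (QuotientGroup.quotientKerEquivRange f).toEquiv, mul_comm]

end Helpers

section HomCount

lemma homCount {p : ℕ} (hp : p.Prime) {Z : Type*} [CommGroup Z] (hZ : Nat.card Z = p) :
    ∀ (n : ℕ) (Q : Type*) [Group Q] [Finite Q],
      Nat.card Q ≤ n → Nat.card (Q →* Z) ≤ Nat.card Q := by
  intro n
  induction n with
  | zero =>
    intro Q _ _ h
    exact absurd h (by simpa using Nat.card_pos (α := Q).ne')
  | succ n ih =>
    intro Q _ _ hle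
    have hZfin : Finite Z := Nat.finite_of_card_ne_zero (by rw [hZ]; exact hp.pos.ne')
    have hfin : Finite (Q →* Z) := Finite.of_injective _ DFunLike.coe_injective
    by_cases htriv : ∀ f : Q →* Z, f = 1
    · have h1 : Nat.card (Q →* Z) = 1 :=
        Nat.card_eq_one_iff_unique.mpr ⟨⟨fun f g => (htriv f).trans (htriv g).symm⟩, ⟨1⟩⟩
      rw [h1]; exact Nat.card_pos
    push_neg at htriv
    obtain ⟨f, hf⟩ := htriv
    have hrange : f.range ≠ ⊥ := by
      intro h
      apply hf
      ext q
      have h2 : f q ∈ f.range := ⟨q, rfl⟩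
      rw [h, Subgroup.mem_bot] at h2
      simp [h2]
    have hidx : f.ker.index = p := by
      rw [Subgroup.index_ker]
      have hd : Nat.card f.range ∣ p := hZ ▸ Subgroup.card_subgroup_dvd_card f.range
      rcases (Nat.dvd_prime hp).mp hd with h1 | h1
      · exact absurd (Subgroup.eq_bot_of_card_eq _ h1) hrange
      · exact h1
    have hcard : Nat.card f.ker * p = Nat.card Q := by
      rw [← hidx]; exact Subgroup.card_mul_index f.ker
    have hklt : Nat.card f.ker ≤ n := by
      nlinarith [hp.two_le, Nat.card_pos (α := f.ker), hle]
    have hkne : f.ker ≠ ⊤ := by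
      intro h
      rw [h, Subgroup.index_top] at hidx
      exact hp.one_lt.ne' hidx.symm
    obtain ⟨q₀, hq₀⟩ : ∃ q₀, q₀ ∉ f.ker := by
      by_contra h
      push_neg at h
      exact hkne ((Subgroup.eq_top_iff' f.ker).mpr h)
    have hsup : f.ker ⊔ Subgroup.zpowers q₀ = ⊤ := by
      set M := f.ker ⊔ Subgroup.zpowers q₀ with hM
      have h1 : f.ker ≤ M := le_sup_left
      have h2 := Subgroup.relIndex_mul_index h1
      rw [hidx] at h2
      have hdvd : M.index ∣ p := Dvd.intro_left _ h2
      rcases (Nat.dvd_prime hp).mp hdvd with h3 | h3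
      · exact Subgroup.index_eq_one.mp h3
      · exfalso
        rw [h3] at h2
        have h4 : f.ker.relIndex M = 1 :=
          Nat.eq_of_mul_eq_mul_right hp.pos (by rw [h2, one_mul])
        rw [Subgroup.relIndex_eq_one] at h4
        exact hq₀ (h4 (le_sup_right (a := f.ker) (Subgroup.mem_zpowers q₀)))
    let res : (Q →* Z) →* (↥f.ker →* Z) :=
      { toFun := fun g => g.comp f.ker.subtype
        map_one' := rfl
        map_mul' := fun _ _ => rfl }
    have hresker : ∀ g : res.ker, ∀ x ∈ f.ker, (g : Q →* Z) x = 1 := by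
      intro g x hx
      have h2 : res (g : Q →* Z) = 1 := g.2
      exact DFunLike.congr_fun h2 (⟨x, hx⟩ : ↥f.ker)
    have hkerres : Nat.card res.ker ≤ p := by
      rw [← hZ]
      apply Nat.card_le_card_of_injective (fun g : res.ker => (g : Q →* Z) q₀)
      intro g g' hgg'
      have hone : ((g : Q →* Z) * (g' : Q →* Z)⁻¹) = 1 := by
        have hker' : f.ker ⊔ Subgroup.zpowers q₀ ≤ ((g : Q →* Z) * (g' : Q →* Z)⁻¹).ker := by
          rw [sup_le_iff]
          constructor
          · intro x hx
            rw [MonoidHom.mem_ker]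
            show (g : Q →* Z) x * ((g' : Q →* Z) x)⁻¹ = 1
            rw [hresker g x hx, hresker g' x hx]; simp
          · rw [Subgroup.zpowers_le, MonoidHom.mem_ker]
            show (g : Q →* Z) q₀ * ((g' : Q →* Z) q₀)⁻¹ = 1
            simp only at hgg'
            rw [hgg']; simp
        rw [hsup] at hker'
        ext q
        have h3 := hker' (Subgroup.mem_top q)
        rw [MonoidHom.mem_ker] at h3
        have h4 : (g : Q →* Z) q * ((g' : Q →* Z) q)⁻¹ = 1 := h3
        simpa [mul_inv_eq_one] using h4
      exact Subtype.ext (mul_inv_eq_one.mp hone)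
    have hfink : Finite (↥f.ker →* Z) := Finite.of_injective _ DFunLike.coe_injective
    have hres_range : Nat.card res.range ≤ Nat.card (↥f.ker →* Z) :=
      Nat.card_le_card_of_injective res.range.subtype Subtype.coe_injective
    calc Nat.card (Q →* Z) = Nat.card res.ker * Nat.card res.range := card_dom_eq_mul res
      _ ≤ p * Nat.card (↥f.ker →* Z) := Nat.mul_le_mul hkerres hres_range
      _ ≤ p * Nat.card ↥f.ker := Nat.mul_le_mul_left p (ih ↥f.ker hklt)
      _ = Nat.card Q := by rw [mul_comm]; exact hcard

end HomCount

section Structure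

variable {G : Type*} [Group G]

lemma exists_good_N {p : ℕ} (hp : p.Prime) [Finite G] (hpG : IsPGroup p G)
    (W : Subgroup ↥(Subgroup.center G)) (hW : W ≠ ⊤) :
    ∃ N : Subgroup G, N ≤ Subgroup.center G ∧ (N.subgroupOf (Subgroup.center G)).index = p ∧
      W.map (Subgroup.center G).subtype ≤ N := by
  haveI : Fact p.Prime := ⟨hp⟩
  set Q := ↥(Subgroup.center G) ⧸ W with hQ
  haveI : Nontrivial Q := by
    obtain ⟨z, hz⟩ : ∃ z, z ∉ W := by
      by_contra h
      push_neg at h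
      exact hW ((Subgroup.eq_top_iff' W).mpr h)
    refine ⟨QuotientGroup.mk z, 1, ?_⟩
    intro h1
    exact hz ((QuotientGroup.eq_one_iff z).mp h1)
  have hQp : IsPGroup p Q := (hpG.to_subgroup (Subgroup.center G)).to_quotient W
  obtain ⟨m, hm⟩ := IsPGroup.iff_card.mp hQp
  have hm1 : 1 ≤ m := by
    rcases Nat.eq_zero_or_pos m with h | h
    · rw [h, pow_zero] at hm
      exact absurd hm (Finite.one_lt_card_iff_nontrivial.mpr ‹_›).ne'
    · exact h
  obtain ⟨M, hM⟩ := Sylow.exists_subgroup_card_pow_prime (G := Q) p (n := m - 1)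
    (by rw [hm]; exact pow_dvd_pow p (by omega))
  have hMidx : M.index = p := by
    have h1 := Subgroup.card_mul_index M
    rw [hM, hm] at h1
    have h2 : p ^ (m - 1) * M.index = p ^ (m - 1) * p := by
      rw [h1, ← pow_succ]
      congr 1
      omega
    exact Nat.eq_of_mul_eq_mul_left (pow_pos hp.pos _) h2
  refine ⟨(M.comap (QuotientGroup.mk' W)).map (Subgroup.center G).subtype,
    Subgroup.map_subtype_le _, ?_, ?_⟩
  · have h3 : ((M.comap (QuotientGroup.mk' W)).map
        (Subgroup.center G).subtype).subgroupOf (Subgroup.center G)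
        = M.comap (QuotientGroup.mk' W) :=
      Subgroup.comap_map_eq_self_of_injective (Subgroup.center G).subtype_injective _
    rw [h3, Subgroup.index_comap_of_surjective _ (QuotientGroup.mk'_surjective W)]
    exact hMidx
  · apply Subgroup.map_mono
    intro w hw
    have : QuotientGroup.mk' W w = 1 := by
      rw [← MonoidHom.mem_ker, QuotientGroup.ker_mk']
      exact hw
    show QuotientGroup.mk' W w ∈ M
    rw [this]
    exact M.one_mem

end Structure

section Structure2

variable {G : Type*} [Group G]

lemma aux_center_quot {p : ℕ} (hp : p.Prime) [Finite G] (hse : IsSemiExtraspecial p G)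
    (N : Subgroup G) [N.Normal] (hNle : N ≤ Subgroup.center G)
    (hNidx : (N.subgroupOf (Subgroup.center G)).index = p) :
    (Subgroup.center G).map (QuotientGroup.mk' N) = Subgroup.center (G ⧸ N) ∧
    commutator (G ⧸ N) = Subgroup.center (G ⧸ N) ∧
    Nat.card (Subgroup.center (G ⧸ N)) = p := by
  obtain ⟨-, hcomm, -, hcard⟩ := hse N hNle hNidx
  have hle : (Subgroup.center G).map (QuotientGroup.mk' N) ≤ Subgroup.center (G ⧸ N) := by
    rintro _ ⟨z, hz, rfl⟩
    rw [Subgroup.mem_center_iff]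
    intro q
    refine QuotientGroup.induction_on q ?_
    intro y
    show QuotientGroup.mk' N y * QuotientGroup.mk' N z
      = QuotientGroup.mk' N z * QuotientGroup.mk' N y
    rw [← map_mul, ← map_mul, Subgroup.mem_center_iff.mp hz y]
  have hcardmap : Nat.card ((Subgroup.center G).map (QuotientGroup.mk' N)) = p := by
    set f := (QuotientGroup.mk' N).comp (Subgroup.center G).subtype with hf
    have hrange : f.range = (Subgroup.center G).map (QuotientGroup.mk' N) := by
      rw [hf, MonoidHom.range_comp, Subgroup.range_subtype]
    have hker : f.ker = N.subgroupOf (Subgroup.center G) := by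
      rw [hf, ← MonoidHom.comap_ker, QuotientGroup.ker_mk']
      rfl
    have h1 := Subgroup.index_ker f
    rw [hker, hNidx, hrange] at h1
    exact h1.symm
  have heq : (Subgroup.center G).map (QuotientGroup.mk' N) = Subgroup.center (G ⧸ N) :=
    Subgroup.eq_of_le_of_card_ge hle (by rw [hcardmap, hcard])
  exact ⟨heq, hcomm, hcard⟩

lemma aux_comm_center {p : ℕ} (hp : p.Prime) [Finite G] [Nontrivial G] (hpG : IsPGroup p G)
    (hse : IsSemiExtraspecial p G) : commutator G = Subgroup.center G := by
  haveI : Fact p.Prime := ⟨hp⟩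
  haveI hZnt : Nontrivial ↥(Subgroup.center G) := hpG.center_nontrivial
  have key : ∀ N : Subgroup G, N ≤ Subgroup.center G →
      (N.subgroupOf (Subgroup.center G)).index = p →
      Subgroup.center G = commutator G ⊔ N := by
    intro N hNle hNidx
    haveI := myNormalOfLeCenter hNle
    obtain ⟨hmap, hcomm, hcard⟩ := aux_center_quot hp hse N hNle hNidx
    have hcq : commutator (G ⧸ N) = (commutator G).map (QuotientGroup.mk' N) := by
      rw [commutator_def, commutator_def, Subgroup.map_commutator]
      congr 1 <;>
        exact (Subgroup.map_top_of_surjective _ (QuotientGroup.mk'_surjective N)).symm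
    have h2 : (Subgroup.center G).map (QuotientGroup.mk' N)
        = (commutator G).map (QuotientGroup.mk' N) := by
      rw [hmap, ← hcomm, hcq]
    have h3 := congrArg (Subgroup.comap (QuotientGroup.mk' N)) h2
    rw [Subgroup.comap_map_eq, Subgroup.comap_map_eq, QuotientGroup.ker_mk'] at h3
    rw [sup_eq_left.mpr hNle] at h3
    exact h3
  have hbotne : (⊥ : Subgroup ↥(Subgroup.center G)) ≠ ⊤ := by
    intro h
    obtain ⟨z, hz⟩ := exists_ne (1 : ↥(Subgroup.center G))
    apply hz
    have : z ∈ (⊥ : Subgroup ↥(Subgroup.center G)) := by rw [h]; trivial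
    exact this
  obtain ⟨N₀, hN₀le, hN₀idx, -⟩ := exists_good_N hp hpG ⊥ hbotne
  have h0 := key N₀ hN₀le hN₀idx
  have hcomm_le : commutator G ≤ Subgroup.center G := by
    rw [h0]; exact le_sup_left
  by_contra hne
  have hKne : (commutator G).subgroupOf (Subgroup.center G) ≠ ⊤ := by
    intro h
    rw [Subgroup.subgroupOf_eq_top] at h
    exact hne (le_antisymm hcomm_le h)
  obtain ⟨N₁, hN₁le, hN₁idx, hWle⟩ := exists_good_N hp hpG _ hKne
  have h1 := key N₁ hN₁le hN₁idx
  have hcommle : commutator G ≤ N₁ := by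
    have h4 := Subgroup.subgroupOf_map_subtype (commutator G) (Subgroup.center G)
    rw [inf_eq_left.mpr hcomm_le] at h4
    exact h4 ▸ hWle
  rw [sup_eq_right.mpr hcommle] at h1
  rw [← h1, Subgroup.subgroupOf_self, Subgroup.index_top] at hN₁idx
  exact hp.one_lt.ne' hN₁idx.symm

lemma psi_surj {p : ℕ} (hp : p.Prime) [Finite G] (hpG : IsPGroup p G)
    (hse : IsSemiExtraspecial p G)
    (hc : ∀ x y : G, ⁅x, y⁆ ∈ Subgroup.center G)
    {x : G} (hx : x ∉ Subgroup.center G) : (psiHom hc x).range = ⊤ := by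
  by_contra hW
  obtain ⟨N, hNle, hNidx, hWN⟩ := exists_good_N hp hpG _ hW
  haveI := myNormalOfLeCenter hNle
  obtain ⟨hmap, -, -⟩ := aux_center_quot hp hse N hNle hNidx
  have hxc : QuotientGroup.mk' N x ∈ Subgroup.center (G ⧸ N) := by
    rw [Subgroup.mem_center_iff]
    intro q
    refine QuotientGroup.induction_on q ?_
    intro y
    show QuotientGroup.mk' N y * QuotientGroup.mk' N x
      = QuotientGroup.mk' N x * QuotientGroup.mk' N y
    rw [← map_mul, ← map_mul]
    have h1 : (⁅y, x⁆ : G) ∈ N := by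
      have h2 : (⟨⁅y, x⁆, hc y x⟩ : ↥(Subgroup.center G)) ∈ (psiHom hc x).range := ⟨y, rfl⟩
      exact hWN (Subgroup.mem_map_of_mem _ h2)
    have h2 : y * x = ⁅y, x⁆ * (x * y) := by group
    rw [h2, map_mul]
    have h3 : QuotientGroup.mk' N ⁅y, x⁆ = 1 := by
      rw [← MonoidHom.mem_ker, QuotientGroup.ker_mk']
      exact h1
    rw [h3, one_mul]
  rw [← hmap] at hxc
  obtain ⟨z, hz, hzx⟩ := hxc
  have h5 : z⁻¹ * x ∈ N := by
    rw [← QuotientGroup.ker_mk' N, MonoidHom.mem_ker, map_mul, map_inv, hzx]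
    simp
  have h6 : x ∈ Subgroup.center G := by
    have hx2 : x = z * (z⁻¹ * x) := by group
    rw [hx2]
    exact mul_mem hz (hNle h5)
  exact hx h6

end Structure2

section Core

lemma abelian_bound_core {p : ℕ} (hp : p.Prime) {E : Type*} [Group E] [Finite E]
    (hc : ∀ x y : E, ⁅x, y⁆ ∈ Subgroup.center E)
    (hcent : Nat.card (Subgroup.center E) = p)
    (B : Subgroup E) (hB : ∀ x ∈ B, ∀ y ∈ B, x * y = y * x)
    (hZB : Subgroup.center E ≤ B) :
    Nat.card B * Nat.card B ≤ Nat.card E * p := by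
  set C := Subgroup.centralizer (B : Set E) with hC
  have hBC : B ≤ C := by
    intro x hx
    rw [Subgroup.mem_centralizer_iff]
    intro h hh
    exact hB h hh x hx
  have hZC : Subgroup.center E ≤ C := by
    intro z hz
    rw [Subgroup.mem_centralizer_iff]
    intro h _
    exact Subgroup.mem_center_iff.mp hz h
  haveI hCn : C.Normal := by
    constructor
    intro c hcmem h
    have h1 : h * c * h⁻¹ = ⁅h, c⁆ * c := by group
    rw [h1]
    exact mul_mem (hZC (hc h c)) hcmem
  -- the lifted homomorphisms
  have hker_psi : ∀ x : B, C ≤ (psiHom hc (x : E)).ker := by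
    intro x y hy
    apply Subtype.ext
    show (⁅y, (x : E)⁆ : E) = 1
    rw [commutatorElement_eq_one_iff_mul_comm]
    exact (Subgroup.mem_centralizer_iff.mp hy (x : E) x.2).symm
  let theta : B →* ((E ⧸ C) →* ↥(Subgroup.center E)) :=
    { toFun := fun x => QuotientGroup.lift C (psiHom hc (x : E)) (hker_psi x)
      map_one' := by
        ext y
        show (⁅y, ((1 : B) : E)⁆ : E) = 1
        simp
      map_mul' := by
        intro x x'
        ext y
        show (⁅y, (x : E) * (x' : E)⁆ : E) = ⁅y, (x : E)⁆ * ⁅y, (x' : E)⁆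
        have h1 : (⁅y, (x : E) * (x' : E)⁆ : E)
            = ⁅y, (x : E)⁆ * ((x : E) * ⁅y, (x' : E)⁆ * (x : E)⁻¹) := by group
        rw [h1, Subgroup.mem_center_iff.mp (hc y (x' : E)) (x : E), mul_inv_cancel_right] }
  have hkertheta : theta.ker = (Subgroup.center E).subgroupOf B := by
    ext x
    constructor
    · intro hx
      rw [MonoidHom.mem_ker] at hx
      have h1 : ∀ y : E, theta x (QuotientGroup.mk y) = 1 := by
        intro y
        rw [hx]
        rfl
      show (x : E) ∈ Subgroup.center E
      rw [Subgroup.mem_center_iff]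
      intro y
      have h2 := h1 y
      have h3 : (⁅y, (x : E)⁆ : E) = 1 := by
        rw [Subtype.ext_iff] at h2
        exact h2
      exact (commutatorElement_eq_one_iff_mul_comm.mp h3)
    · intro hx
      rw [MonoidHom.mem_ker]
      ext y
      show (⁅y, (x : E)⁆ : E) = 1
      rw [commutatorElement_eq_one_iff_mul_comm]
      exact (Subgroup.mem_center_iff.mp hx y)
  have hcardker : Nat.card theta.ker = p := by
    rw [hkertheta, ← hcent]
    exact Nat.card_congr (Subgroup.subgroupOfEquivOfLe hZB).toEquiv
  haveI : Finite ((E ⧸ C) →* ↥(Subgroup.center E)) :=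
    Finite.of_injective _ DFunLike.coe_injective
  have hrange_le : Nat.card theta.range ≤ Nat.card ((E ⧸ C) →* ↥(Subgroup.center E)) :=
    Nat.card_le_card_of_injective theta.range.subtype Subtype.coe_injective
  have hhom : Nat.card ((E ⧸ C) →* ↥(Subgroup.center E)) ≤ Nat.card (E ⧸ C) :=
    homCount hp hcent (Nat.card (E ⧸ C)) (E ⧸ C) le_rfl
  have hQC : Nat.card (E ⧸ C) = C.index := (Subgroup.index_eq_card C).symm
  have hCB : C.index ≤ B.index :=
    Nat.le_of_dvd (Nat.pos_of_ne_zero (Subgroup.index_ne_zero_of_finite))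
      (Subgroup.index_dvd_of_le hBC)
  have hcardB : Nat.card B ≤ p * B.index := by
    calc Nat.card B = Nat.card theta.ker * Nat.card theta.range := card_dom_eq_mul theta
      _ ≤ p * Nat.card (E ⧸ C) := by
          rw [hcardker]
          exact Nat.mul_le_mul_left p (hrange_le.trans hhom)
      _ = p * C.index := by rw [hQC]
      _ ≤ p * B.index := Nat.mul_le_mul_left p hCB
  calc Nat.card B * Nat.card B ≤ (p * B.index) * Nat.card B := Nat.mul_le_mul_right _ hcardB
    _ = p * (B.index * Nat.card B) := by ring
    _ = p * Nat.card E := by rw [Subgroup.index_mul_card]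
    _ = Nat.card E * p := by ring

end Core

/-- (Verardi) In a finite semi-extraspecial `p`-group with `|G : G'| = p ^ (2a)` and
`|G'| = p ^ b`: every abelian subgroup has order at most `p ^ (a + b)`, and for every
`g ∉ G'` the center of the centralizer of `g` has order between `p ^ (b + 1)` and
`p ^ (2b)`. -/
theorem semiExtraspecial_abelian_bound {p a b : ℕ} (hp : p.Prime) {G : Type*} [Group G]
    [Finite G] (hpG : IsPGroup p G) (hse : IsSemiExtraspecial p G)
    (hind : (commutator G).index = p ^ (2 * a)) (hcard : Nat.card (commutator G) = p ^ b) :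
    (∀ A : Subgroup G, IsMulCommutative A → Nat.card A ≤ p ^ (a + b)) ∧
    (∀ g : G, g ∉ commutator G →
      p ^ (b + 1) ≤ Nat.card (Subgroup.center (Subgroup.centralizer {g})) ∧
      Nat.card (Subgroup.center (Subgroup.centralizer {g})) ≤ p ^ (2 * b)) := by
  haveI : Fact p.Prime := ⟨hp⟩
  rcases subsingleton_or_nontrivial G with hGs | hGnt
  · constructor
    · intro A _
      have h1 : Nat.card A ≤ Nat.card G := Subgroup.card_le_card_group A
      have h2 : Nat.card G = 1 :=
        Nat.card_eq_one_iff_unique.mpr ⟨⟨fun x y => Subsingleton.elim x y⟩, ⟨1⟩⟩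
      calc Nat.card A ≤ 1 := h2 ▸ h1
        _ ≤ p ^ (a + b) := Nat.one_le_pow _ _ hp.pos
    · intro g hg
      exact (hg (by rw [Subsingleton.elim g 1]; exact one_mem _)).elim
  have hZeq : commutator G = Subgroup.center G := aux_comm_center hp hpG hse
  have hcardZ : Nat.card ↥(Subgroup.center G) = p ^ b := hZeq ▸ hcard
  have hc : ∀ x y : G, ⁅x, y⁆ ∈ Subgroup.center G := by
    intro x y
    rw [← hZeq, commutator_def]
    exact Subgroup.commutator_mem_commutator (Subgroup.mem_top x) (Subgroup.mem_top y)
  haveI hZnt : Nontrivial ↥(Subgroup.center G) := hpG.center_nontrivial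
  have hb : 1 ≤ b := by
    by_contra h
    push_neg at h
    have h0 : b = 0 := by omega
    rw [h0, pow_zero] at hcardZ
    exact (Finite.one_lt_card_iff_nontrivial.mpr hZnt).ne' hcardZ
  have hcardG : Nat.card G = p ^ (2 * a + b) := by
    have h1 := Subgroup.card_mul_index (commutator G)
    rw [hcard, hind] at h1
    rw [← h1, ← pow_add]
    congr 1
    omega
  have hbotne : (⊥ : Subgroup ↥(Subgroup.center G)) ≠ ⊤ := by
    intro h
    obtain ⟨z, hz⟩ := exists_ne (1 : ↥(Subgroup.center G))
    apply hz
    have h2 : z ∈ (⊥ : Subgroup ↥(Subgroup.center G)) := by rw [h]; trivial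
    exact h2
  constructor
  · -- Part 1
    intro A hA
    haveI := hA
    obtain ⟨N, hNle, hNidx, -⟩ := exists_good_N hp hpG ⊥ hbotne
    haveI := myNormalOfLeCenter hNle
    obtain ⟨hmap, hcommq, hcentq⟩ := aux_center_quot hp hse N hNle hNidx
    have hcardN : Nat.card N * p = p ^ b := by
      have h1 := Subgroup.card_mul_index (N.subgroupOf (Subgroup.center G))
      rw [hNidx, hcardZ] at h1
      have h2 : Nat.card (N.subgroupOf (Subgroup.center G)) = Nat.card N :=
        Nat.card_congr (Subgroup.subgroupOfEquivOfLe hNle).toEquiv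
      rw [h2] at h1
      exact h1
    have hcardN' : Nat.card N = p ^ (b - 1) := by
      have h1 : p ^ (b - 1) * p = p ^ b := by
        rw [← pow_succ]
        congr 1
        omega
      exact Nat.eq_of_mul_eq_mul_right hp.pos (hcardN.trans h1.symm)
    have hcardE : Nat.card (G ⧸ N) = p ^ (2 * a + 1) := by
      have h1 := Subgroup.card_mul_index N
      rw [hcardN', hcardG] at h1
      rw [← Subgroup.index_eq_card]
      have h2 : p ^ (b - 1) * N.index = p ^ (b - 1) * p ^ (2 * a + 1) := by
        rw [h1, ← pow_add]
        congr 1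
        omega
      exact Nat.eq_of_mul_eq_mul_left (pow_pos hp.pos _) h2
    set B0 := A ⊔ Subgroup.center G with hB0
    have hB0comm : ∀ x ∈ B0, ∀ y ∈ B0, x * y = y * x := by
      have hmem : ∀ x ∈ B0, ∃ u ∈ A, ∃ z ∈ Subgroup.center G, x = u * z := by
        intro x hx
        have h6 : (↑(A ⊔ Subgroup.center G) : Set G)
            = (↑A : Set G) * (↑(Subgroup.center G) : Set G) :=
          Subgroup.mul_normal A (Subgroup.center G)
        have h7 : x ∈ (↑A * ↑(Subgroup.center G) : Set G) := by
          rw [← h6]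
          exact hx
        obtain ⟨u, hu, z, hz, hxz⟩ := h7
        exact ⟨u, hu, z, hz, hxz.symm⟩
      intro x hx y hy
      obtain ⟨u, hu, z, hz, rfl⟩ := hmem x hx
      obtain ⟨v, hv, w, hw, rfl⟩ := hmem y hy
      have hzc := Subgroup.mem_center_iff.mp hz
      have hwc := Subgroup.mem_center_iff.mp hw
      have huv : u * v = v * u := Subgroup.mul_comm_of_mem_isMulCommutative A hu hv
      calc u * z * (v * w)
          = u * (v * w) * z := by rw [mul_assoc u z (v * w), ← hzc (v * w), ← mul_assoc]
        _ = u * v * w * z := by rw [← mul_assoc u v w]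
        _ = v * u * w * z := by rw [huv]
        _ = v * w * u * z := by rw [mul_assoc v u w, hwc u, ← mul_assoc]
        _ = v * w * (u * z) := by rw [mul_assoc]
    set Bq := B0.map (QuotientGroup.mk' N) with hBq
    have hBqcomm : ∀ x ∈ Bq, ∀ y ∈ Bq, x * y = y * x := by
      rintro _ ⟨u, hu, rfl⟩ _ ⟨v, hv, rfl⟩
      rw [← map_mul, ← map_mul, hB0comm u hu v hv]
    have hZBq : Subgroup.center (G ⧸ N) ≤ Bq := by
      rw [← hmap]
      exact Subgroup.map_mono le_sup_right
    have hcq : ∀ x y : G ⧸ N, ⁅x, y⁆ ∈ Subgroup.center (G ⧸ N) := by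
      intro x y
      rw [← hcommq, commutator_def]
      exact Subgroup.commutator_mem_commutator (Subgroup.mem_top x) (Subgroup.mem_top y)
    have hcore := abelian_bound_core hp hcq hcentq Bq hBqcomm hZBq
    have hdvd : Nat.card Bq ∣ p ^ (2 * a + 1) := hcardE ▸ Subgroup.card_subgroup_dvd_card Bq
    obtain ⟨k, hk, hkeq⟩ := (Nat.dvd_prime_pow hp).mp hdvd
    have hkle : k + k ≤ 2 * a + 2 := by
      have h8 : p ^ (k + k) ≤ p ^ (2 * a + 2) := by
        calc p ^ (k + k) = p ^ k * p ^ k := by rw [pow_add]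
          _ = Nat.card Bq * Nat.card Bq := by rw [hkeq]
          _ ≤ Nat.card (G ⧸ N) * p := hcore
          _ = p ^ (2 * a + 1) * p := by rw [hcardE]
          _ = p ^ (2 * a + 2) := by rw [← pow_succ]
      exact (Nat.pow_le_pow_iff_right hp.one_lt).mp h8
    have hk2 : Nat.card Bq ≤ p ^ (a + 1) := by
      rw [hkeq]
      exact Nat.pow_le_pow_right hp.pos (by omega)
    have hA_B0 : Nat.card A ≤ Nat.card B0 := Subgroup.card_le_of_le le_sup_left
    have hB0_le : Nat.card B0 = Nat.card N * Nat.card Bq := by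
      set f := (QuotientGroup.mk' N).comp B0.subtype with hf
      have hrange : f.range = Bq := by
        rw [hf, MonoidHom.range_comp, Subgroup.range_subtype]
      have hker : f.ker = N.subgroupOf B0 := by
        rw [hf, ← MonoidHom.comap_ker, QuotientGroup.ker_mk']
        rfl
      have h9 : Nat.card f.ker = Nat.card N := by
        rw [hker]
        exact Nat.card_congr (Subgroup.subgroupOfEquivOfLe (le_trans hNle le_sup_right)).toEquiv
      rw [card_dom_eq_mul f, h9, hrange]
    calc Nat.card A ≤ Nat.card B0 := hA_B0
      _ = Nat.card N * Nat.card Bq := hB0_le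
      _ ≤ p ^ (b - 1) * p ^ (a + 1) := by
          rw [hcardN']
          exact Nat.mul_le_mul_left _ hk2
      _ = p ^ (a + b) := by rw [← pow_add]; congr 1; omega
  · -- Part 2
    intro g hg
    have hgZ : g ∉ Subgroup.center G := by rw [← hZeq]; exact hg
    set C := Subgroup.centralizer ({g} : Set G) with hC
    have hgC : g ∈ C := Subgroup.mem_centralizer_singleton_iff.mpr rfl
    have hZleC : Subgroup.center G ≤ C := by
      intro z hz
      rw [Subgroup.mem_centralizer_iff]
      intro h _
      exact Subgroup.mem_center_iff.mp hz h
    set T := (Subgroup.center ↥C).map C.subtype with hT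
    have hcardT : Nat.card (Subgroup.center ↥C) = Nat.card T :=
      Nat.card_congr (Subgroup.equivMapOfInjective _ _ C.subtype_injective).toEquiv
    have hZT : Subgroup.center G ≤ T := by
      intro z hz
      exact ⟨⟨z, hZleC hz⟩,
        Subgroup.mem_center_iff.mpr (fun c => Subtype.ext (Subgroup.mem_center_iff.mp hz c)), rfl⟩
    have hgT : g ∈ T := by
      refine ⟨⟨g, hgC⟩, ?_, rfl⟩
      show (⟨g, hgC⟩ : ↥C) ∈ Subgroup.center ↥C
      rw [Subgroup.mem_center_iff]
      intro c
      apply Subtype.ext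
      exact Subgroup.mem_centralizer_singleton_iff.mp c.2
    set S := Subgroup.center G ⊔ Subgroup.zpowers g with hS
    have hST : S ≤ T := sup_le hZT (Subgroup.zpowers_le.mpr hgT)
    have hlower : p ^ (b + 1) ≤ Nat.card S := by
      have hd1 : Nat.card ↥(Subgroup.center G) ∣ Nat.card S :=
        Subgroup.card_dvd_of_le le_sup_left
      have hd2 : Nat.card S ∣ Nat.card G := Subgroup.card_subgroup_dvd_card S
      rw [hcardG] at hd2
      obtain ⟨s, hs, hseq⟩ := (Nat.dvd_prime_pow hp).mp hd2
      rw [hcardZ, hseq] at hd1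
      have hbs : b ≤ s := (Nat.pow_dvd_pow_iff_le_right hp.one_lt).mp hd1
      have hne : Nat.card S ≠ p ^ b := by
        intro h
        have h10 : Subgroup.center G = S :=
          Subgroup.eq_of_le_of_card_ge le_sup_left (by rw [h, hcardZ])
        have hgS : g ∈ S := Subgroup.mem_sup_right (Subgroup.mem_zpowers g)
        rw [← h10] at hgS
        exact hgZ hgS
      have hs1 : b + 1 ≤ s := by
        rcases Nat.lt_or_ge b s with h | h
        · omega
        · exfalso
          have : s = b := by omega
          rw [this] at hseq
          exact hne hseq
      rw [hseq]
      exact Nat.pow_le_pow_right hp.pos hs1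
    have hlow : p ^ (b + 1) ≤ Nat.card (Subgroup.center ↥C) := by
      calc p ^ (b + 1) ≤ Nat.card S := hlower
        _ ≤ Nat.card T := Subgroup.card_le_of_le hST
        _ = Nat.card (Subgroup.center ↥C) := hcardT.symm
    obtain ⟨y₀, hy₀⟩ : ∃ y₀ : G, y₀ ∉ C := by
      by_contra h
      push_neg at h
      apply hgZ
      rw [Subgroup.mem_center_iff]
      intro h'
      exact Subgroup.mem_centralizer_singleton_iff.mp (h h')
    have hidxC : C.index ≤ p ^ b := by
      rw [hC, ← psiHom_ker hc g, Subgroup.index_ker, ← hcardZ]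
      exact Subgroup.card_le_card_group _
    have hkey : ∀ x : G, x ∈ C → (∀ c ∈ C, c * x = x * c) → x ∉ Subgroup.center G →
        Subgroup.centralizer {x} = C := by
      intro x hxC hxZC hxZ
      have hle2 : C ≤ Subgroup.centralizer {x} := by
        intro c hc2
        rw [Subgroup.mem_centralizer_singleton_iff]
        exact hxZC c hc2
      have hidxx : (Subgroup.centralizer {x}).index = p ^ b := by
        rw [← psiHom_ker hc x, Subgroup.index_ker, psi_surj hp hpG hse hc hxZ, ← hcardZ]
        exact Subgroup.card_top
      have hcc : Nat.card (Subgroup.centralizer {x}) ≤ Nat.card C := by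
        have h1 := Subgroup.card_mul_index (Subgroup.centralizer {x})
        have h2 := Subgroup.card_mul_index C
        have h3 : Nat.card (Subgroup.centralizer {x}) * p ^ b = Nat.card G := by
          rw [← hidxx]
          exact h1
        have h4 : Nat.card G ≤ Nat.card C * p ^ b := by
          rw [← h2]
          exact Nat.mul_le_mul_left _ hidxC
        have h5 : Nat.card (Subgroup.centralizer {x}) * p ^ b ≤ Nat.card C * p ^ b := by
          rw [h3]
          exact h4
        exact Nat.le_of_mul_le_mul_right h5 (pow_pos hp.pos b)
      exact (Subgroup.eq_of_le_of_card_ge hle2 hcc).symm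
    let Theta : ↥(Subgroup.center ↥C) →* ↥(Subgroup.center G) :=
      { toFun := fun x => ⟨⁅y₀, ((x : ↥C) : G)⁆, hc y₀ _⟩
        map_one' := by
          apply Subtype.ext
          show (⁅y₀, (((1 : ↥(Subgroup.center ↥C)) : ↥C) : G)⁆ : G) = 1
          simp
        map_mul' := by
          intro x x'
          apply Subtype.ext
          show (⁅y₀, ((x : ↥C) : G) * ((x' : ↥C) : G)⁆ : G)
            = ⁅y₀, ((x : ↥C) : G)⁆ * ⁅y₀, ((x' : ↥C) : G)⁆
          have h1 : (⁅y₀, ((x : ↥C) : G) * ((x' : ↥C) : G)⁆ : G)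
              = ⁅y₀, ((x : ↥C) : G)⁆
                * (((x : ↥C) : G) * ⁅y₀, ((x' : ↥C) : G)⁆ * ((x : ↥C) : G)⁻¹) := by
            group
          rw [h1, Subgroup.mem_center_iff.mp (hc y₀ (((x' : ↥C) : G))) (((x : ↥C) : G)),
            mul_inv_cancel_right] }
    have hkerTheta : ∀ x : Theta.ker,
        (((x : ↥(Subgroup.center ↥C)) : ↥C) : G) ∈ Subgroup.center G := by
      intro x
      by_contra hxZ
      set x' := (((x : ↥(Subgroup.center ↥C)) : ↥C) : G) with hx'
      have hx'C : x' ∈ C := ((x : ↥(Subgroup.center ↥C)) : ↥C).2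
      have hx'ZC : ∀ c ∈ C, c * x' = x' * c := by
        intro c hc2
        have h1 := Subgroup.mem_center_iff.mp (x : ↥(Subgroup.center ↥C)).2 ⟨c, hc2⟩
        exact Subtype.ext_iff.mp h1
      have heq := hkey x' hx'C hx'ZC hxZ
      have hy₀x : y₀ ∈ Subgroup.centralizer {x'} := by
        rw [Subgroup.mem_centralizer_singleton_iff]
        have h2 : (⁅y₀, x'⁆ : G) = 1 := by
          have h3 := x.2
          rw [MonoidHom.mem_ker] at h3
          exact Subtype.ext_iff.mp h3
        exact commutatorElement_eq_one_iff_mul_comm.mp h2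
      rw [heq] at hy₀x
      exact hy₀ hy₀x
    have hcardkerT : Nat.card Theta.ker ≤ p ^ b := by
      rw [← hcardZ]
      apply Nat.card_le_card_of_injective
        (fun x : Theta.ker => (⟨_, hkerTheta x⟩ : ↥(Subgroup.center G)))
      intro x x' hxx'
      have h1 := Subtype.ext_iff.mp hxx'
      exact Subtype.ext (Subtype.ext (Subtype.ext h1))
    have hcardrangeT : Nat.card Theta.range ≤ p ^ b := by
      rw [← hcardZ]
      exact Subgroup.card_le_card_group _
    have hupper : Nat.card (Subgroup.center ↥C) ≤ p ^ (2 * b) := by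
      calc Nat.card (Subgroup.center ↥C) = Nat.card Theta.ker * Nat.card Theta.range :=
            card_dom_eq_mul Theta
        _ ≤ p ^ b * p ^ b := Nat.mul_le_mul hcardkerT hcardrangeT
        _ = p ^ (2 * b) := by rw [← pow_add]; congr 1; omega
    exact ⟨hlow, hupper⟩
end

section
/- Let (F,+,*) be a pre-semifield of order p^a for a prime p, and let G(F) be its semifield group. Then G(F) is an ultraspecial p-group of order |F|^3 that has at least two abelian subgroups of order |F|^2; indeed A1 = {(a,0,c) : a,c ∈ F} and A2 = {(0,b,c) : b,c ∈ F} are abelian subgroups of G(F) of order |F|^2. -/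
open scoped commutatorElement


/-- A (finite) pre-semifield structure on an additive abelian group `F`: a
multiplication satisfying both distributive laws and having no zero divisors.
(Finiteness and nontriviality of `F` are imposed as hypotheses where needed.) -/
structure PreSemifield (F : Type*) [AddCommGroup F] where
  mul : F → F → F
  add_mul : ∀ a b c : F, mul (a + b) c = mul a c + mul b c
  mul_add : ∀ a b c : F, mul a (b + c) = mul a b + mul a c
  eq_zero_or_eq_zero_of_mul_eq_zero : ∀ a b : F, mul a b = 0 → a = 0 ∨ b = 0

namespace PreSemifield

variable {F : Type*} [AddCommGroup F] (S : PreSemifield F)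

theorem mul_zero (a : F) : S.mul a 0 = 0 := by
  have h := S.mul_add a 0 0
  rw [add_zero] at h
  exact left_eq_add.mp h

theorem zero_mul (b : F) : S.mul 0 b = 0 := by
  have h := S.add_mul 0 0 b
  rw [add_zero] at h
  exact left_eq_add.mp h

theorem mul_neg (a b : F) : S.mul a (-b) = -S.mul a b := by
  have h := S.mul_add a b (-b)
  rw [add_neg_cancel, S.mul_zero] at h
  linear_combination (norm := abel) -h

theorem neg_mul (a b : F) : S.mul (-a) b = -S.mul a b := by
  have h := S.add_mul a (-a) b
  rw [add_neg_cancel, S.zero_mul] at h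
  linear_combination (norm := abel) -h

end PreSemifield

/-- The semifield group `G(F)` of a pre-semifield `F`: the set `F × F × F` with
multiplication `(a₁,b₁,c₁) ⬝ (a₂,b₂,c₂) = (a₁+a₂, b₁+b₂, c₁+c₂+a₁*b₂)`. -/
def SemifieldGroup {F : Type*} [AddCommGroup F] (_S : PreSemifield F) : Type _ :=
  F × F × F

namespace SemifieldGroup

variable {F : Type*} [AddCommGroup F] (S : PreSemifield F)

instance : Group (SemifieldGroup S) where
  mul x y := (x.1 + y.1, x.2.1 + y.2.1, x.2.2 + y.2.2 + S.mul x.1 y.2.1)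
  one := ((0 : F), (0 : F), (0 : F))
  inv x := (-x.1, -x.2.1, -x.2.2 + S.mul x.1 x.2.1)
  mul_assoc x y z := by
    show ((_ : F), (_ : F), (_ : F)) = ((_ : F), (_ : F), (_ : F))
    refine Prod.ext (add_assoc _ _ _) (Prod.ext (add_assoc _ _ _) ?_)
    show x.2.2 + y.2.2 + S.mul x.1 y.2.1 + z.2.2 + S.mul (x.1 + y.1) z.2.1 =
      x.2.2 + (y.2.2 + z.2.2 + S.mul y.1 z.2.1) + S.mul x.1 (y.2.1 + z.2.1)
    rw [S.add_mul, S.mul_add]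
    abel
  one_mul x := by
    show ((_ : F), (_ : F), (_ : F)) = x
    refine Prod.ext (zero_add _) (Prod.ext (zero_add _) ?_)
    show 0 + x.2.2 + S.mul 0 x.2.1 = x.2.2
    rw [S.zero_mul, zero_add, add_zero]
  mul_one x := by
    show ((_ : F), (_ : F), (_ : F)) = x
    refine Prod.ext (add_zero _) (Prod.ext (add_zero _) ?_)
    show x.2.2 + 0 + S.mul x.1 0 = x.2.2
    rw [S.mul_zero, add_zero, add_zero]
  inv_mul_cancel x := by
    show ((_ : F), (_ : F), (_ : F)) = ((0 : F), (0 : F), (0 : F))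
    refine Prod.ext (neg_add_cancel _) (Prod.ext (neg_add_cancel _) ?_)
    show -x.2.2 + S.mul x.1 x.2.1 + x.2.2 + S.mul (-x.1) x.2.1 = 0
    rw [S.neg_mul]
    abel

instance [Finite F] : Finite (SemifieldGroup S) :=
  inferInstanceAs (Finite (F × F × F))

end SemifieldGroup

namespace SemifieldGroup

variable {F : Type*} [AddCommGroup F] (S : PreSemifield F)

/-- The subgroup `A₁ = {(a, 0, c) : a, c ∈ F}` of the semifield group `G(F)`. -/
def A1 : Subgroup (SemifieldGroup S) where
  carrier := {x : F × F × F | x.2.1 = 0}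
  mul_mem' {x y} hx hy := by
    show x.2.1 + y.2.1 = 0
    rw [show x.2.1 = 0 from hx, show y.2.1 = 0 from hy, add_zero]
  one_mem' := rfl
  inv_mem' {x} hx := by
    show -x.2.1 = 0
    rw [show x.2.1 = 0 from hx, neg_zero]

/-- The subgroup `A₂ = {(0, b, c) : b, c ∈ F}` of the semifield group `G(F)`. -/
def A2 : Subgroup (SemifieldGroup S) where
  carrier := {x : F × F × F | x.1 = 0}
  mul_mem' {x y} hx hy := by
    show x.1 + y.1 = 0
    rw [show x.1 = 0 from hx, show y.1 = 0 from hy, add_zero]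
  one_mem' := rfl
  inv_mem' {x} hx := by
    show -x.1 = 0
    rw [show x.1 = 0 from hx, neg_zero]

end SemifieldGroup



open Subgroup in
lemma aux_exists_coatom_not_mem {A : Type*} [CommGroup A] [Finite A] {p : ℕ} (hp : p.Prime)
    (hA : ∀ x : A, x ^ p = 1) {v : A} (hv : v ≠ 1) :
    ∃ M : Subgroup A, IsCoatom M ∧ v ∉ M := by
  obtain ⟨M, hMs, hMmax⟩ := Set.Finite.exists_maximalFor id {M : Subgroup A | v ∉ M}
    (Set.toFinite _) ⟨⊥, by simpa using hv⟩
  replace hMmax : ∀ K : Subgroup A, v ∉ K → M ≤ K → M = K :=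
    fun K hK hle => le_antisymm hle (@hMmax K hK hle)
  have key : M ⊔ Subgroup.zpowers v = ⊤ := by
    rw [eq_top_iff]
    intro w _
    by_contra hw
    have hwM : w ∉ M := fun h => hw (mem_sup_left h)
    have hlt : M < M ⊔ zpowers w :=
      lt_of_le_of_ne le_sup_left fun h => hwM (h ▸ mem_sup_right (mem_zpowers w))
    have hvmem : v ∈ M ⊔ zpowers w := by
      by_contra h
      exact hlt.ne (hMmax _ h hlt.le)
    obtain ⟨m, hm, z, hz, hmz⟩ := mem_sup.mp hvmem
    obtain ⟨k, hk⟩ := mem_zpowers_iff.mp hz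
    have hwkv : w ^ k = m⁻¹ * v := by rw [← hmz, hk, inv_mul_cancel_left]
    have hwp : w ^ (p : ℤ) = 1 := by
      rw [zpow_natCast]; exact hA w
    by_cases hdvd : (p : ℤ) ∣ k
    · obtain ⟨j, hj⟩ := hdvd
      apply hMs
      have : w ^ k = 1 := by rw [hj, zpow_mul, hwp, one_zpow]
      rw [← hmz, ← hk, this, mul_one]
      exact hm
    · have h1 : ¬ p ∣ k.natAbs := fun h => hdvd (Int.natCast_dvd.mpr h)
      have h2 : Nat.Coprime p k.natAbs := (hp.coprime_iff_not_dvd).mpr h1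
      have h3 : IsCoprime (p : ℤ) k := by
        rw [Int.isCoprime_iff_gcd_eq_one]
        simpa [Int.gcd, Int.natAbs_natCast] using h2
      obtain ⟨u, t, hut⟩ := h3
      have hwk : w ^ k ∈ M ⊔ zpowers v := by
        rw [hwkv]
        exact mul_mem (mem_sup_left (inv_mem hm)) (mem_sup_right (mem_zpowers _))
      apply hw
      have he2 : w = (w ^ k) ^ t := by
        calc w = w ^ (u * (p:ℤ) + t * k) := by rw [hut, zpow_one]
        _ = (w ^ (p:ℤ)) ^ u * (w ^ k) ^ t := by
            rw [zpow_add, mul_comm u, mul_comm t, zpow_mul, zpow_mul]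
        _ = (w ^ k) ^ t := by rw [hwp, one_zpow, one_mul]
      rw [he2]
      exact zpow_mem hwk t
  refine ⟨M, ⟨fun h => hMs (h.symm ▸ Subgroup.mem_top v), fun K hK => ?_⟩, hMs⟩
  have hvK : v ∈ K := by
    by_contra h
    exact hK.ne (hMmax K h hK.le)
  exact eq_top_iff.mpr (key ▸ sup_le hK.le (zpowers_le.mpr hvK))

lemma aux_isExtraspecial {G : Type*} [Group G] [Finite G] {p : ℕ} (hp : p.Prime)
    (h1 : commutator G = Subgroup.center G)
    (h3 : ∀ g : G, g ^ p ∈ Subgroup.center G)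
    (h4 : Nat.card (Subgroup.center G) = p) :
    IsExtraspecial p G := by
  have hp1 : 1 < p := hp.one_lt
  have hZbot : Subgroup.center G ≠ ⊥ := by
    intro h
    rw [h, Subgroup.card_bot] at h4
    omega
  have hpg : IsPGroup p G := fun g => ⟨2, by
    have hz : (⟨g ^ p, h3 g⟩ : Subgroup.center G) ^ Nat.card (Subgroup.center G) = 1 :=
      pow_card_eq_one'
    rw [h4] at hz
    have h5 : (g ^ p) ^ p = 1 := by
      simpa using congrArg Subtype.val hz
    rw [show p ^ 2 = p * p from sq p, pow_mul]
    exact h5⟩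
  haveI : Fact p.Prime := ⟨hp⟩
  haveI : Group.IsNilpotent G := hpg.isNilpotent
  have hnc : NormalizerCondition G := normalizerCondition_of_isNilpotent
  have hcom_le : ∀ M : Subgroup G, IsCoatom M → Subgroup.center G ≤ M := by
    intro M hM
    haveI hMn : M.Normal := Subgroup.NormalizerCondition.normal_of_coatom M hnc hM
    rw [← h1, commutator_def, Subgroup.commutator_le]
    intro g _ h _
    have hcomm : ∀ x y : G ⧸ M, x * y = y * x := by
      intro x y
      rcases eq_or_ne x 1 with rfl | hx
      · rw [one_mul, mul_one]
      · have hx' : Subgroup.zpowers x = ⊤ := by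
          have hle : M ≤ Subgroup.comap (QuotientGroup.mk' M) (Subgroup.zpowers x) := by
            intro m hm
            rw [Subgroup.mem_comap, QuotientGroup.mk'_apply,
              (QuotientGroup.eq_one_iff m).mpr hm]
            exact one_mem _
          have hne : M ≠ Subgroup.comap (QuotientGroup.mk' M) (Subgroup.zpowers x) := by
            intro h
            obtain ⟨g0, rfl⟩ := QuotientGroup.mk'_surjective M x
            have : g0 ∈ Subgroup.comap (QuotientGroup.mk' M) (Subgroup.zpowers _) :=
              Subgroup.mem_comap.mpr (Subgroup.mem_zpowers _)
            rw [← h] at this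
            exact hx ((QuotientGroup.eq_one_iff g0).mpr this)
          have htop := hM.2 _ (lt_of_le_of_ne hle hne)
          rw [eq_top_iff]
          intro y _
          obtain ⟨g0, rfl⟩ := QuotientGroup.mk'_surjective M y
          have : g0 ∈ Subgroup.comap (QuotientGroup.mk' M) (Subgroup.zpowers x) := by
            rw [htop]; trivial
          exact Subgroup.mem_comap.mp this
        have hy : y ∈ Subgroup.zpowers x := hx' ▸ Subgroup.mem_top y
        obtain ⟨n, rfl⟩ := hy
        exact ((Commute.refl x).zpow_right n)
    have hone : (QuotientGroup.mk' M) ⁅g, h⁆ = 1 := by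
      rw [map_commutatorElement, commutatorElement_eq_one_iff_mul_comm]
      exact hcomm _ _
    exact (QuotientGroup.eq_one_iff _).mp hone
  refine ⟨?_, h1, ?_, h4⟩
  · by_contra hab
    push_neg at hab
    have hbot : commutator G = ⊥ := by
      rw [commutator_def, eq_bot_iff]
      rw [Subgroup.commutator_le]
      intro g _ h _
      rw [Subgroup.mem_bot, commutatorElement_eq_one_iff_mul_comm]
      exact hab g h
    exact hZbot (h1 ▸ hbot)
  · apply le_antisymm
    · show Subgroup.center G ≤ frattini G
      rw [frattini, Order.radical]
      exact le_iInf₂ fun M hM => hcom_le M hM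
    · intro g hg
      by_contra hgZ
      letI : CommGroup (G ⧸ Subgroup.center G) :=
        { (inferInstance : Group (G ⧸ Subgroup.center G)) with
          mul_comm := fun x y => by
            obtain ⟨b1, rfl⟩ := QuotientGroup.mk'_surjective _ x
            obtain ⟨b2, rfl⟩ := QuotientGroup.mk'_surjective _ y
            rw [← map_mul, ← map_mul]
            have hc : ⁅b1, b2⁆ ∈ Subgroup.center G := by
              rw [← h1]
              exact Subgroup.commutator_mem_commutator (Subgroup.mem_top b1)
                (Subgroup.mem_top b2)
            have he : b1 * b2 = ⁅b1, b2⁆ * (b2 * b1) := by group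
            rw [he, map_mul, QuotientGroup.mk'_apply,
              (QuotientGroup.eq_one_iff _).mpr hc, one_mul] }
      have hq1 : ∀ x : G ⧸ Subgroup.center G, x ^ p = 1 := fun x => by
        obtain ⟨g0, rfl⟩ := QuotientGroup.mk'_surjective _ x
        rw [← map_pow, QuotientGroup.mk'_apply, QuotientGroup.eq_one_iff]
        exact h3 g0
      have hv : (QuotientGroup.mk' (Subgroup.center G)) g ≠ 1 := by
        rw [QuotientGroup.mk'_apply, Ne, QuotientGroup.eq_one_iff]
        exact hgZ
      obtain ⟨M, hM, hvM⟩ := aux_exists_coatom_not_mem hp hq1 hv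
      have hMco : IsCoatom (M.comap (QuotientGroup.mk' (Subgroup.center G))) :=
        Subgroup.isCoatom_comap_of_surjective (QuotientGroup.mk'_surjective _) hM
      exact hvM (frattini_le_coatom hMco hg)

lemma aux_isSemiExtraspecial {G : Type*} [Group G] [Finite G] {p : ℕ} (hp : p.Prime)
    (h1 : commutator G = Subgroup.center G)
    (h2 : ∀ g : G, g ∉ Subgroup.center G → ∀ z ∈ Subgroup.center G, ∃ x, ⁅g, x⁆ = z)
    (h3 : ∀ g : G, g ^ p ∈ Subgroup.center G) :
    IsSemiExtraspecial p G := by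
  intro N _ hNle hNidx
  set π := QuotientGroup.mk' N with hπ
  have hπs : Function.Surjective π := QuotientGroup.mk'_surjective N
  have hNne : N ≠ Subgroup.center G := by
    intro h
    rw [h, Subgroup.subgroupOf_self, Subgroup.index_top] at hNidx
    exact absurd hNidx hp.one_lt.ne
  have hcent : Subgroup.center (G ⧸ N) = Subgroup.map π (Subgroup.center G) := by
    ext q
    constructor
    · intro hq
      obtain ⟨g, rfl⟩ := hπs q
      have hgZ : g ∈ Subgroup.center G := by
        by_contra hg
        apply hNne
        apply le_antisymm hNle
        intro z hz
        obtain ⟨x, hx⟩ := h2 g hg z hz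
        have hone : π ⁅g, x⁆ = 1 := by
          rw [map_commutatorElement, commutatorElement_eq_one_iff_mul_comm]
          exact (Subgroup.mem_center_iff.mp hq (π x)).symm
        rw [hx] at hone
        exact (QuotientGroup.eq_one_iff z).mp hone
      exact ⟨g, hgZ, rfl⟩
    · rintro ⟨z, hz, rfl⟩
      rw [Subgroup.mem_center_iff]
      intro q
      obtain ⟨x, rfl⟩ := hπs q
      rw [← map_mul, ← map_mul, Subgroup.mem_center_iff.mp hz x]
  have hcomm : commutator (G ⧸ N) = Subgroup.center (G ⧸ N) := by
    rw [hcent, ← h1, commutator_def, commutator_def, Subgroup.map_commutator,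
      Subgroup.map_top_of_surjective π hπs]
  have hcard : Nat.card (Subgroup.center (G ⧸ N)) = p := by
    rw [hcent]
    set φ := π.comp (Subgroup.center G).subtype with hφ
    have hrange : φ.range = Subgroup.map π (Subgroup.center G) := by
      ext q
      constructor
      · rintro ⟨z, rfl⟩
        exact ⟨z, z.2, rfl⟩
      · rintro ⟨g, hg, rfl⟩
        exact ⟨⟨g, hg⟩, rfl⟩
    have hker : φ.ker = N.subgroupOf (Subgroup.center G) := by
      ext z
      rw [MonoidHom.mem_ker, Subgroup.mem_subgroupOf]
      show π ((Subgroup.center G).subtype z) = 1 ↔ _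
      rw [Subgroup.coe_subtype, QuotientGroup.mk'_apply, QuotientGroup.eq_one_iff]
    rw [← hrange]
    calc Nat.card φ.range = Nat.card (Subgroup.center G ⧸ φ.ker) :=
          Nat.card_congr (QuotientGroup.quotientKerEquivRange φ).toEquiv.symm
    _ = φ.ker.index := rfl
    _ = p := by rw [hker]; exact hNidx
  apply aux_isExtraspecial hp hcomm ?_ hcard
  intro q
  obtain ⟨g, rfl⟩ := hπs q
  rw [← map_pow, hcent]
  exact Subgroup.mem_map_of_mem π (h3 g)

namespace SemifieldGroup

variable {F : Type*} [AddCommGroup F] (S : PreSemifield F)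

lemma mul_def' (x y : SemifieldGroup S) :
    x * y = (x.1 + y.1, x.2.1 + y.2.1, x.2.2 + y.2.2 + S.mul x.1 y.2.1) := rfl

lemma inv_def' (x : SemifieldGroup S) :
    x⁻¹ = (-x.1, -x.2.1, -x.2.2 + S.mul x.1 x.2.1) := rfl

lemma mul_left_injective {y : F} (hy : y ≠ 0) : Function.Injective (S.mul y) := by
  intro u v h
  have h2 : v + (u - v) = u := by abel
  have h3 := S.mul_add y v (u - v)
  rw [h2, h] at h3
  have h4 : S.mul y (u - v) = 0 := by
    have := h3.symm
    rw [← sub_eq_zero] at h3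
    linear_combination (norm := abel) - h3
  rcases S.eq_zero_or_eq_zero_of_mul_eq_zero _ _ h4 with h' | h'
  · exact absurd h' hy
  · exact sub_eq_zero.mp h'

lemma mul_right_injective {y : F} (hy : y ≠ 0) :
    Function.Injective (fun x => S.mul x y) := by
  intro u v h
  simp only at h
  have h2 : v + (u - v) = u := by abel
  have h3 := S.add_mul v (u - v) y
  rw [h2, h] at h3
  have h4 : S.mul (u - v) y = 0 := by
    rw [← sub_eq_zero] at h3
    linear_combination (norm := abel) - h3
  rcases S.eq_zero_or_eq_zero_of_mul_eq_zero _ _ h4 with h' | h'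
  · exact sub_eq_zero.mp h'
  · exact absurd h' hy

lemma mul_left_surjective [Finite F] {y : F} (hy : y ≠ 0) :
    Function.Surjective (S.mul y) :=
  Finite.injective_iff_surjective.mp (mul_left_injective S hy)

lemma mul_right_surjective [Finite F] {y : F} (hy : y ≠ 0) :
    Function.Surjective (fun x => S.mul x y) :=
  Finite.injective_iff_surjective.mp (mul_right_injective S hy)

lemma char_smul {F : Type*} [AddCommGroup F] [Finite F] (S : PreSemifield F)
    {p a : ℕ} (hp : p.Prime) (ha : 0 < a)
    (hFcard : Nat.card F = p ^ a) : ∀ x : F, p • x = 0 := by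
  haveI : Fact p.Prime := ⟨hp⟩
  haveI := Fintype.ofFinite F
  have hdvd : p ∣ Fintype.card F := by
    rw [← Nat.card_eq_fintype_card, hFcard]
    exact dvd_pow_self p ha.ne'
  obtain ⟨y, hy⟩ := exists_prime_addOrderOf_dvd_card p hdvd
  have hy0 : y ≠ 0 := by
    intro h
    rw [h, addOrderOf_zero] at hy
    exact absurd hy hp.one_lt.ne
  have hpy : p • y = 0 := by rw [← hy]; exact addOrderOf_nsmul_eq_zero y
  intro x
  obtain ⟨b, hb⟩ := mul_left_surjective S hy0 x
  have hhom : S.mul (p • y) b = p • S.mul y b :=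
    map_nsmul (AddMonoidHom.mk' (fun u => S.mul u b) (fun u v => S.add_mul u v b)) p y
  rw [← hb, ← hhom, hpy, S.zero_mul]

lemma mem_center_iff' (hnt : ∃ u : F, u ≠ 0) (g : SemifieldGroup S) :
    g ∈ Subgroup.center (SemifieldGroup S) ↔ g.1 = 0 ∧ g.2.1 = 0 := by
  obtain ⟨u, hu⟩ := hnt
  rw [Subgroup.mem_center_iff]
  constructor
  · intro h
    constructor
    · have h2 := congrArg (fun t : SemifieldGroup S => t.2.2) (h ((0 : F), u, (0 : F)))
      change 0 + g.2.2 + S.mul 0 g.2.1 = g.2.2 + 0 + S.mul g.1 u at h2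
      rw [S.zero_mul, add_zero, zero_add, add_zero] at h2
      have h3 : S.mul g.1 u = 0 := (left_eq_add.mp h2)
      rcases S.eq_zero_or_eq_zero_of_mul_eq_zero _ _ h3 with h' | h'
      · exact h'
      · exact absurd h' hu
    · have h2 := congrArg (fun t : SemifieldGroup S => t.2.2) (h (u, (0 : F), (0 : F)))
      change 0 + g.2.2 + S.mul u g.2.1 = g.2.2 + 0 + S.mul g.1 0 at h2
      rw [S.mul_zero, add_zero, zero_add, add_zero] at h2
      have h3 : S.mul u g.2.1 = 0 := (left_eq_add.mp h2.symm)
      rcases S.eq_zero_or_eq_zero_of_mul_eq_zero _ _ h3 with h' | h'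
      · exact absurd h' hu
      · exact h'
  · rintro ⟨h1, h2⟩ x
    refine Prod.ext ?_ (Prod.ext ?_ ?_)
    · show x.1 + g.1 = g.1 + x.1
      exact add_comm _ _
    · show x.2.1 + g.2.1 = g.2.1 + x.2.1
      exact add_comm _ _
    · show x.2.2 + g.2.2 + S.mul x.1 g.2.1 = g.2.2 + x.2.2 + S.mul g.1 x.2.1
      rw [h1, h2, S.mul_zero, S.zero_mul]
      abel

lemma commutatorElement_eq (g x : SemifieldGroup S) :
    ⁅g, x⁆ = ((0 : F), (0 : F), S.mul g.1 x.2.1 - S.mul x.1 g.2.1) := by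
  show g * x * g⁻¹ * x⁻¹ = _
  refine Prod.ext ?_ (Prod.ext ?_ ?_)
  · show g.1 + x.1 + -g.1 + -x.1 = 0
    abel
  · show g.2.1 + x.2.1 + -g.2.1 + -x.2.1 = 0
    abel
  · show g.2.2 + x.2.2 + S.mul g.1 x.2.1 + (-g.2.2 + S.mul g.1 g.2.1)
        + S.mul (g.1 + x.1) (-g.2.1)
        + (-x.2.2 + S.mul x.1 x.2.1) + S.mul (g.1 + x.1 + -g.1) (-x.2.1)
      = S.mul g.1 x.2.1 - S.mul x.1 g.2.1
    simp only [S.add_mul, S.mul_neg, S.neg_mul, neg_neg]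
    abel

lemma commutator_eq_center [Finite F] (hnt : ∃ u : F, u ≠ 0) :
    commutator (SemifieldGroup S) = Subgroup.center (SemifieldGroup S) := by
  apply le_antisymm
  · rw [commutator_def, Subgroup.commutator_le]
    intro g _ x _
    rw [commutatorElement_eq]
    refine (mem_center_iff' S hnt _).mpr ?_
    exact ⟨rfl, rfl⟩
  · intro z hz
    obtain ⟨hz1, hz2⟩ := (mem_center_iff' S hnt z).mp hz
    obtain ⟨u, hu⟩ := hnt
    obtain ⟨b, hb⟩ := mul_left_surjective S hu z.2.2
    let g : SemifieldGroup S := (u, 0, 0)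
    let x : SemifieldGroup S := (0, b, 0)
    have hc : ⁅g, x⁆ = z := by
      rw [commutatorElement_eq]
      refine Prod.ext hz1.symm (Prod.ext hz2.symm ?_)
      show S.mul u b - S.mul 0 0 = z.2.2
      rw [hb, S.zero_mul, sub_zero]
    rw [← hc]
    exact Subgroup.commutator_mem_commutator (Subgroup.mem_top _) (Subgroup.mem_top _)

lemma exists_commutator_eq [Finite F] (hnt : ∃ u : F, u ≠ 0) :
    ∀ g : SemifieldGroup S, g ∉ Subgroup.center (SemifieldGroup S) →
      ∀ z ∈ Subgroup.center (SemifieldGroup S), ∃ x, ⁅g, x⁆ = z := by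
  intro g hg z hz
  obtain ⟨hz1, hz2⟩ := (mem_center_iff' S hnt z).mp hz
  rw [mem_center_iff' S hnt, not_and_or] at hg
  rcases hg with hg | hg
  · obtain ⟨b, hb⟩ := mul_left_surjective S hg z.2.2
    refine ⟨(((0 : F), b, (0 : F)) : SemifieldGroup S), ?_⟩
    refine (commutatorElement_eq S g _).trans ?_
    refine Prod.ext hz1.symm (Prod.ext hz2.symm ?_)
    show S.mul g.1 b - S.mul 0 g.2.1 = z.2.2
    rw [hb, S.zero_mul, sub_zero]
  · obtain ⟨d, hd⟩ := mul_right_surjective S hg (-z.2.2)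
    refine ⟨((d, 0, 0) : SemifieldGroup S), ?_⟩
    refine (commutatorElement_eq S g _).trans ?_
    refine Prod.ext hz1.symm (Prod.ext hz2.symm ?_)
    show S.mul g.1 0 - S.mul d g.2.1 = z.2.2
    rw [S.mul_zero, show S.mul d g.2.1 = -z.2.2 from hd, zero_sub, neg_neg]

lemma pow_coords (g : SemifieldGroup S) (n : ℕ) :
    (g ^ n).1 = n • g.1 ∧ (g ^ n).2.1 = n • g.2.1 := by
  induction n with
  | zero => constructor <;> rw [pow_zero, zero_nsmul] <;> rfl
  | succ n ih =>
    constructor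
    · show (g ^ n * g).1 = (n + 1) • g.1
      rw [mul_def', ih.1, succ_nsmul]
    · show (g ^ n * g).2.1 = (n + 1) • g.2.1
      rw [mul_def']
      show (g ^ n).2.1 + g.2.1 = (n + 1) • g.2.1
      rw [ih.2, succ_nsmul]

lemma pow_mem_center (hnt : ∃ u : F, u ≠ 0) {p : ℕ} (hchar : ∀ x : F, p • x = 0)
    (g : SemifieldGroup S) : g ^ p ∈ Subgroup.center (SemifieldGroup S) := by
  rw [mem_center_iff' S hnt]
  exact ⟨(pow_coords S g p).1.trans (hchar g.1), (pow_coords S g p).2.trans (hchar g.2.1)⟩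

lemma card_center [Finite F] (hnt : ∃ u : F, u ≠ 0) :
    Nat.card (Subgroup.center (SemifieldGroup S)) = Nat.card F := by
  apply Nat.card_congr
  exact
    { toFun := fun z => (z : SemifieldGroup S).2.2
      invFun := fun c => ⟨((0 : F), (0 : F), c), (mem_center_iff' S hnt _).mpr ⟨rfl, rfl⟩⟩
      left_inv := fun z => by
        obtain ⟨h1, h2⟩ := (mem_center_iff' S hnt _).mp z.2
        exact Subtype.ext (Prod.ext h1.symm (Prod.ext h2.symm rfl))
      right_inv := fun c => rfl }

lemma card_G [Finite F] : Nat.card (SemifieldGroup S) = Nat.card F ^ 3 := by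
  show Nat.card (F × F × F) = Nat.card F ^ 3
  rw [Nat.card_prod, Nat.card_prod]
  ring

lemma A1_isCommutative : IsMulCommutative (A1 S) := by
  refine ⟨⟨fun x y => ?_⟩⟩
  have hx : (x : SemifieldGroup S).2.1 = 0 := x.2
  have hy : (y : SemifieldGroup S).2.1 = 0 := y.2
  apply Subtype.ext
  show ((x : SemifieldGroup S) * y) = ((y : SemifieldGroup S) * x)
  refine Prod.ext ?_ (Prod.ext ?_ ?_)
  · show (x : SemifieldGroup S).1 + (y : SemifieldGroup S).1
        = (y : SemifieldGroup S).1 + (x : SemifieldGroup S).1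
    exact add_comm _ _
  · show (x : SemifieldGroup S).2.1 + (y : SemifieldGroup S).2.1
        = (y : SemifieldGroup S).2.1 + (x : SemifieldGroup S).2.1
    exact add_comm _ _
  · show (x : SemifieldGroup S).2.2 + (y : SemifieldGroup S).2.2
        + S.mul (x : SemifieldGroup S).1 (y : SemifieldGroup S).2.1
      = (y : SemifieldGroup S).2.2 + (x : SemifieldGroup S).2.2
        + S.mul (y : SemifieldGroup S).1 (x : SemifieldGroup S).2.1
    rw [hx, hy, S.mul_zero, S.mul_zero]
    abel

lemma A2_isCommutative : IsMulCommutative (A2 S) := by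
  refine ⟨⟨fun x y => ?_⟩⟩
  have hx : (x : SemifieldGroup S).1 = 0 := x.2
  have hy : (y : SemifieldGroup S).1 = 0 := y.2
  apply Subtype.ext
  show ((x : SemifieldGroup S) * y) = ((y : SemifieldGroup S) * x)
  refine Prod.ext ?_ (Prod.ext ?_ ?_)
  · show (x : SemifieldGroup S).1 + (y : SemifieldGroup S).1
        = (y : SemifieldGroup S).1 + (x : SemifieldGroup S).1
    exact add_comm _ _
  · show (x : SemifieldGroup S).2.1 + (y : SemifieldGroup S).2.1
        = (y : SemifieldGroup S).2.1 + (x : SemifieldGroup S).2.1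
    exact add_comm _ _
  · show (x : SemifieldGroup S).2.2 + (y : SemifieldGroup S).2.2
        + S.mul (x : SemifieldGroup S).1 (y : SemifieldGroup S).2.1
      = (y : SemifieldGroup S).2.2 + (x : SemifieldGroup S).2.2
        + S.mul (y : SemifieldGroup S).1 (x : SemifieldGroup S).2.1
    rw [hx, hy, S.zero_mul, S.zero_mul]
    abel

lemma A1_ne_A2 (hnt : ∃ u : F, u ≠ 0) : A1 S ≠ A2 S := by
  obtain ⟨u, hu⟩ := hnt
  intro h
  have hm : ((u, 0, 0) : SemifieldGroup S) ∈ A1 S := rfl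
  rw [h] at hm
  exact hu hm

lemma card_A1 [Finite F] : Nat.card (A1 S) = Nat.card F ^ 2 := by
  have e : (A1 S) ≃ F × F :=
    { toFun := fun z => ((z : SemifieldGroup S).1, (z : SemifieldGroup S).2.2)
      invFun := fun w => ⟨(w.1, 0, w.2), rfl⟩
      left_inv := fun z => Subtype.ext (Prod.ext rfl (Prod.ext (Eq.symm z.2) rfl))
      right_inv := fun w => rfl }
  rw [Nat.card_congr e, Nat.card_prod, sq]

lemma card_A2 [Finite F] : Nat.card (A2 S) = Nat.card F ^ 2 := by
  have e : (A2 S) ≃ F × F :=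
    { toFun := fun z => ((z : SemifieldGroup S).2.1, (z : SemifieldGroup S).2.2)
      invFun := fun w => ⟨(0, w.1, w.2), rfl⟩
      left_inv := fun z => Subtype.ext (Prod.ext (Eq.symm z.2) rfl)
      right_inv := fun w => rfl }
  rw [Nat.card_congr e, Nat.card_prod, sq]

end SemifieldGroup

/-- The semifield group `G(F)` of a pre-semifield `F` of order `p ^ a` is an
ultraspecial `p`-group of order `|F| ^ 3` having at least two abelian subgroups of
order `|F| ^ 2`, namely `A₁ = {(a,0,c)}` and `A₂ = {(0,b,c)}`. -/
theorem semifieldGroup_ultraspecial {F : Type*} [AddCommGroup F] [Finite F]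
    (S : PreSemifield F) (p a : ℕ) (hp : p.Prime) (ha : 0 < a)
    (hFcard : Nat.card F = p ^ a) :
    IsPGroup p (SemifieldGroup S) ∧
    IsSemiExtraspecial p (SemifieldGroup S) ∧
    Nat.card (commutator (SemifieldGroup S)) ^ 2 = (commutator (SemifieldGroup S)).index ∧
    Nat.card (SemifieldGroup S) = Nat.card F ^ 3 ∧
    IsMulCommutative (SemifieldGroup.A1 S) ∧ IsMulCommutative (SemifieldGroup.A2 S) ∧
    SemifieldGroup.A1 S ≠ SemifieldGroup.A2 S ∧
    Nat.card (SemifieldGroup.A1 S) = Nat.card F ^ 2 ∧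
    Nat.card (SemifieldGroup.A2 S) = Nat.card F ^ 2 := by
  have hnt : ∃ u : F, u ≠ 0 := by
    have h1 : 1 < Nat.card F := by
      rw [hFcard]
      calc 1 < p := hp.one_lt
      _ ≤ p ^ a := Nat.le_self_pow ha.ne' p
    haveI : Nontrivial F := Finite.one_lt_card_iff_nontrivial.mp h1
    exact exists_ne 0
  have hchar := SemifieldGroup.char_smul S hp ha hFcard
  have hcomm := SemifieldGroup.commutator_eq_center S hnt
  have hcardG := SemifieldGroup.card_G S
  have hcardZ := SemifieldGroup.card_center S hnt
  refine ⟨?_, ?_, ?_, hcardG, SemifieldGroup.A1_isCommutative S,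
    SemifieldGroup.A2_isCommutative S, SemifieldGroup.A1_ne_A2 S hnt,
    SemifieldGroup.card_A1 S, SemifieldGroup.card_A2 S⟩
  · apply IsPGroup.of_card (n := 3 * a)
    rw [hcardG, hFcard, ← pow_mul, mul_comm a 3]
  · exact aux_isSemiExtraspecial hp hcomm (SemifieldGroup.exists_commutator_eq S hnt)
      (SemifieldGroup.pow_mem_center S hnt hchar)
  · rw [hcomm, hcardZ]
    have hmul := Subgroup.card_mul_index (Subgroup.center (SemifieldGroup S))
    rw [hcardZ, hcardG] at hmul
    have hpos : 0 < Nat.card F := Nat.card_pos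
    have h2 : Nat.card F * (Subgroup.center (SemifieldGroup S)).index
        = Nat.card F * Nat.card F ^ 2 := by rw [hmul]; ring
    exact (Nat.eq_of_mul_eq_mul_left hpos h2).symm
end

section
/- Let (F1,+,*1) and (F2,+,*2) be pre-semifields. Then the semifield groups G(F1) and G(F2) are isomorphic as groups if and only if F1 and F2 are isotopic or anti-isotopic. -/
/-- Two pre-semifields are isotopic if there are additive isomorphisms `α`, `β`, `γ`
with `γ (a *₁ b) = α a *₂ β b` for all `a`, `b`. -/
def PreSemifield.Isotopic {F1 F2 : Type*} [AddCommGroup F1] [AddCommGroup F2]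
    (S1 : PreSemifield F1) (S2 : PreSemifield F2) : Prop :=
  ∃ α β γ : F1 ≃+ F2, ∀ a b : F1, γ (S1.mul a b) = S2.mul (α a) (β b)

/-- Two pre-semifields are anti-isotopic if there are additive isomorphisms `α`, `β`,
`γ` with `γ (a *₁ b) = β b *₂ α a` for all `a`, `b`. -/
def PreSemifield.AntiIsotopic {F1 F2 : Type*} [AddCommGroup F1] [AddCommGroup F2]
    (S1 : PreSemifield F1) (S2 : PreSemifield F2) : Prop :=
  ∃ α β γ : F1 ≃+ F2, ∀ a b : F1, γ (S1.mul a b) = S2.mul (β b) (α a)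


/-! ### Auxiliary lemmas for the proof -/

namespace PreSemifield

variable {F : Type*} [AddCommGroup F] (S : PreSemifield F)

theorem mul_sub (a b c : F) : S.mul a (b - c) = S.mul a b - S.mul a c := by
  rw [sub_eq_add_neg, S.mul_add, S.mul_neg, sub_eq_add_neg]

theorem sub_mul (a b c : F) : S.mul (a - b) c = S.mul a c - S.mul b c := by
  rw [sub_eq_add_neg, S.add_mul, S.neg_mul, sub_eq_add_neg]

theorem mul_left_injective {a : F} (ha : a ≠ 0) : Function.Injective (S.mul a) := by
  intro b c h
  have h0 : S.mul a (b - c) = 0 := by rw [S.mul_sub, h, sub_self]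
  rcases S.eq_zero_or_eq_zero_of_mul_eq_zero _ _ h0 with h' | h'
  · exact absurd h' ha
  · exact sub_eq_zero.mp h'

theorem mul_right_injective {b : F} (hb : b ≠ 0) :
    Function.Injective (fun a => S.mul a b) := by
  intro a c h
  have h0 : S.mul (a - c) b = 0 := by
    rw [S.sub_mul]
    simpa [sub_eq_zero] using h
  rcases S.eq_zero_or_eq_zero_of_mul_eq_zero _ _ h0 with h' | h'
  · exact sub_eq_zero.mp h'
  · exact absurd h' hb

end PreSemifield

namespace SemifieldGroup

variable {F : Type*} [AddCommGroup F] {S : PreSemifield F}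

theorem ext {x y : SemifieldGroup S} (h1 : x.1 = y.1) (h2 : x.2.1 = y.2.1)
    (h3 : x.2.2 = y.2.2) : x = y :=
  Prod.ext h1 (Prod.ext h2 h3)

theorem mul_fst (x y : SemifieldGroup S) : (x * y).1 = x.1 + y.1 := rfl

theorem mul_snd (x y : SemifieldGroup S) : (x * y).2.1 = x.2.1 + y.2.1 := rfl

theorem mul_thd (x y : SemifieldGroup S) :
    (x * y).2.2 = x.2.2 + y.2.2 + S.mul x.1 y.2.1 := rfl

/-- Constructor for elements of the semifield group. -/
def mk (S : PreSemifield F) (a b c : F) : SemifieldGroup S := (a, b, c)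

theorem mk_fst (a b c : F) : (SemifieldGroup.mk S a b c).1 = a := rfl
theorem mk_snd (a b c : F) : (SemifieldGroup.mk S a b c).2.1 = b := rfl
theorem mk_thd (a b c : F) : (SemifieldGroup.mk S a b c).2.2 = c := rfl

end SemifieldGroup

section Aux

variable {F1 F2 : Type*} [AddCommGroup F1] [AddCommGroup F2]

/-- The image of a central element `(0,0,c)` under an isomorphism of semifield groups
has vanishing first two coordinates. -/
theorem central_image [Nontrivial F2] {S1 : PreSemifield F1} {S2 : PreSemifield F2}
    (φ : SemifieldGroup S1 ≃* SemifieldGroup S2) (c : F1) :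
    φ (SemifieldGroup.mk S1 0 0 c)
      = SemifieldGroup.mk S2 0 0 (φ (SemifieldGroup.mk S1 0 0 c)).2.2 := by
  set w : SemifieldGroup S2 := φ (SemifieldGroup.mk S1 0 0 c) with hw
  have hz : ∀ x : SemifieldGroup S1,
      SemifieldGroup.mk S1 0 0 c * x = x * SemifieldGroup.mk S1 0 0 c := by
    intro x
    refine SemifieldGroup.ext ?_ ?_ ?_ <;>
      simp only [SemifieldGroup.mul_fst, SemifieldGroup.mul_snd, SemifieldGroup.mul_thd,
        SemifieldGroup.mk_fst, SemifieldGroup.mk_snd, SemifieldGroup.mk_thd,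
        S1.mul_zero, S1.zero_mul] <;> abel
  have hcomm : ∀ g : SemifieldGroup S2, w * g = g * w := by
    intro g
    calc w * g = φ (SemifieldGroup.mk S1 0 0 c * φ.symm g) := by
          rw [map_mul, MulEquiv.apply_symm_apply]
      _ = φ (φ.symm g * SemifieldGroup.mk S1 0 0 c) := by rw [hz]
      _ = g * w := by rw [map_mul, MulEquiv.apply_symm_apply]
  obtain ⟨y, hy⟩ := exists_ne (0 : F2)
  have h1 : w.1 = 0 := by
    have h := congrArg (fun z : SemifieldGroup S2 => z.2.2) (hcomm (SemifieldGroup.mk S2 0 y 0))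
    simp only [SemifieldGroup.mul_thd, SemifieldGroup.mk_fst, SemifieldGroup.mk_snd,
      SemifieldGroup.mk_thd, S2.zero_mul, add_zero, zero_add] at h
    rcases S2.eq_zero_or_eq_zero_of_mul_eq_zero _ _ (add_eq_left.mp h) with h' | h'
    · exact h'
    · exact absurd h' hy
  have h2 : w.2.1 = 0 := by
    have h := congrArg (fun z : SemifieldGroup S2 => z.2.2) (hcomm (SemifieldGroup.mk S2 y 0 0))
    simp only [SemifieldGroup.mul_thd, SemifieldGroup.mk_fst, SemifieldGroup.mk_snd,
      SemifieldGroup.mk_thd, S2.mul_zero, add_zero, zero_add] at h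
    rcases S2.eq_zero_or_eq_zero_of_mul_eq_zero _ _ (left_eq_add.mp h) with h' | h'
    · exact absurd h' hy
    · exact h'
  exact SemifieldGroup.ext h1 h2 rfl

end Aux

section Easy

variable {F1 F2 : Type*} [AddCommGroup F1] [AddCommGroup F2]
  {S1 : PreSemifield F1} {S2 : PreSemifield F2}

theorem isotopic_nonempty_iso (h : S1.Isotopic S2) :
    Nonempty (SemifieldGroup S1 ≃* SemifieldGroup S2) := by
  obtain ⟨α, β, γ, hiso⟩ := h
  refine ⟨MulEquiv.mk' (Equiv.prodCongr α.toEquiv (Equiv.prodCongr β.toEquiv γ.toEquiv)) ?_⟩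
  intro x y
  refine SemifieldGroup.ext ?_ ?_ ?_
  · show α (x.1 + y.1) = α x.1 + α y.1
    exact map_add α _ _
  · show β (x.2.1 + y.2.1) = β x.2.1 + β y.2.1
    exact map_add β _ _
  · show γ (x.2.2 + y.2.2 + S1.mul x.1 y.2.1) = γ x.2.2 + γ y.2.2 + S2.mul (α x.1) (β y.2.1)
    rw [map_add, map_add, hiso]

theorem antiIsotopic_nonempty_iso (h : S1.AntiIsotopic S2) :
    Nonempty (SemifieldGroup S1 ≃* SemifieldGroup S2) := by
  obtain ⟨α, β, γ, hiso⟩ := h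
  refine ⟨MulEquiv.mk' (Equiv.mk
    (fun x : SemifieldGroup S1 =>
      SemifieldGroup.mk S2 (β x.2.1) (α x.1) (S2.mul (β x.2.1) (α x.1) - γ x.2.2))
    (fun z : SemifieldGroup S2 =>
      SemifieldGroup.mk S1 (α.symm z.2.1) (β.symm z.1) (γ.symm (S2.mul z.1 z.2.1 - z.2.2)))
    ?_ ?_) ?_⟩
  · intro x
    refine SemifieldGroup.ext ?_ ?_ ?_ <;>
      simp [SemifieldGroup.mk, SemifieldGroup.mk_fst, SemifieldGroup.mk_snd,
        SemifieldGroup.mk_thd]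
  · intro z
    refine SemifieldGroup.ext ?_ ?_ ?_ <;>
      simp [SemifieldGroup.mk, SemifieldGroup.mk_fst, SemifieldGroup.mk_snd,
        SemifieldGroup.mk_thd]
  · intro x y
    refine SemifieldGroup.ext ?_ ?_ ?_
    · show β ((x * y).2.1) = β x.2.1 + β y.2.1
      rw [SemifieldGroup.mul_snd, map_add]
    · show α ((x * y).1) = α x.1 + α y.1
      rw [SemifieldGroup.mul_fst, map_add]
    · show S2.mul (β ((x * y).2.1)) (α ((x * y).1)) - γ ((x * y).2.2)
        = (S2.mul (β x.2.1) (α x.1) - γ x.2.2) + (S2.mul (β y.2.1) (α y.1) - γ y.2.2)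
          + S2.mul (β x.2.1) (α y.1)
      rw [SemifieldGroup.mul_snd, SemifieldGroup.mul_fst, SemifieldGroup.mul_thd,
        map_add, map_add, map_add, map_add, hiso, S2.mul_add, S2.add_mul, S2.add_mul]
      abel

end Easy

section Hard

variable {F1 F2 : Type*} [AddCommGroup F1] [AddCommGroup F2]
  [Finite F1] [Finite F2] [Nontrivial F1] [Nontrivial F2]

theorem iso_isotopic_or_antiIsotopic {S1 : PreSemifield F1} {S2 : PreSemifield F2}
    (φ : SemifieldGroup S1 ≃* SemifieldGroup S2) :
    S1.Isotopic S2 ∨ S1.AntiIsotopic S2 := by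
  classical
  -- the additive isomorphism induced on the centers
  have hc1 := central_image φ
  have hc2 := central_image φ.symm
  set γ0 : F1 → F2 := fun c => (φ (SemifieldGroup.mk S1 0 0 c)).2.2 with hγ0
  have hγadd : ∀ c c', γ0 (c + c') = γ0 c + γ0 c' := by
    intro c c'
    have hmul : SemifieldGroup.mk S1 0 0 (c + c')
        = SemifieldGroup.mk S1 0 0 c * SemifieldGroup.mk S1 0 0 c' := by
      refine SemifieldGroup.ext ?_ ?_ ?_ <;>
        simp [SemifieldGroup.mk_fst, SemifieldGroup.mk_snd, SemifieldGroup.mk_thd,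
          SemifieldGroup.mul_fst, SemifieldGroup.mul_snd, SemifieldGroup.mul_thd, S1.zero_mul]
    have h := congrArg (fun z : SemifieldGroup S2 => z.2.2) (congrArg φ hmul)
    simp only [map_mul, SemifieldGroup.mul_thd] at h
    rw [hc1 c, hc1 c'] at h
    simpa [SemifieldGroup.mk_fst, SemifieldGroup.mk_snd, SemifieldGroup.mk_thd,
      S2.zero_mul] using h
  have hγinj : Function.Injective γ0 := by
    intro c c' h
    have h1 : φ (SemifieldGroup.mk S1 0 0 c) = φ (SemifieldGroup.mk S1 0 0 c') := by
      rw [hc1 c, hc1 c']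
      exact congrArg (SemifieldGroup.mk S2 0 0) h
    exact congrArg (fun z : SemifieldGroup S1 => z.2.2) (φ.injective h1)
  have hγsurj : Function.Surjective γ0 := by
    intro d
    refine ⟨(φ.symm (SemifieldGroup.mk S2 0 0 d)).2.2, ?_⟩
    have h1 : SemifieldGroup.mk S1 0 0 (φ.symm (SemifieldGroup.mk S2 0 0 d)).2.2
        = φ.symm (SemifieldGroup.mk S2 0 0 d) := (hc2 d).symm
    show (φ (SemifieldGroup.mk S1 0 0 _)).2.2 = d
    rw [h1, MulEquiv.apply_symm_apply]
    rfl
  set γE : F1 ≃+ F2 :=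
    AddEquiv.ofBijective (AddMonoidHom.mk' γ0 hγadd) ⟨hγinj, hγsurj⟩ with hγE
  have hγEapp : ∀ c, γE c = γ0 c := fun _ => rfl
  -- every injection F1 → F2 is bijective
  have bijOf : ∀ f : F1 → F2, Function.Injective f → Function.Bijective f := by
    intro f hf
    have h1 : Function.Bijective (⇑γE.symm ∘ f) :=
      Finite.injective_iff_bijective.mp (γE.symm.injective.comp hf)
    have h2 := γE.bijective.comp h1
    have h3 : ⇑γE ∘ ⇑γE.symm ∘ f = f := by
      funext x; simp
    rwa [h3] at h2
  -- the commutator identity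
  have key : ∀ x y : SemifieldGroup S1,
      S2.mul (φ x).1 (φ y).2.1 - S2.mul (φ y).1 (φ x).2.1
        = γE (S1.mul x.1 y.2.1) - γE (S1.mul y.1 x.2.1) := by
    intro x y
    have h1 : x * y = SemifieldGroup.mk S1 0 0 (S1.mul x.1 y.2.1 - S1.mul y.1 x.2.1) * (y * x) := by
      refine SemifieldGroup.ext ?_ ?_ ?_ <;>
        simp only [SemifieldGroup.mul_fst, SemifieldGroup.mul_snd, SemifieldGroup.mul_thd,
          SemifieldGroup.mk_fst, SemifieldGroup.mk_snd, SemifieldGroup.mk_thd,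
          S1.zero_mul] <;> abel
    have h2 := congrArg (fun z : SemifieldGroup S2 => z.2.2) (congrArg φ h1)
    simp only [map_mul, SemifieldGroup.mul_thd] at h2
    rw [hc1 (S1.mul x.1 y.2.1 - S1.mul y.1 x.2.1)] at h2
    simp only [SemifieldGroup.mk_fst, SemifieldGroup.mk_snd, SemifieldGroup.mk_thd,
      S2.zero_mul, add_zero, zero_add] at h2
    have h4 : (φ (SemifieldGroup.mk S1 0 0 (S1.mul x.1 y.2.1 - S1.mul y.1 x.2.1))).2.2
        = γE (S1.mul x.1 y.2.1 - S1.mul y.1 x.2.1) := rfl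
    rw [h4] at h2
    rw [show γE (S1.mul x.1 y.2.1 - S1.mul y.1 x.2.1)
        = γE (S1.mul x.1 y.2.1) - γE (S1.mul y.1 x.2.1) from map_sub γE _ _] at h2
    linear_combination (norm := abel) h2
  -- the four component maps
  have hAmul : ∀ a a' : F1, SemifieldGroup.mk S1 (a + a') 0 0
      = SemifieldGroup.mk S1 a 0 0 * SemifieldGroup.mk S1 a' 0 0 := by
    intro a a'
    refine SemifieldGroup.ext ?_ ?_ ?_ <;>
      simp [SemifieldGroup.mk_fst, SemifieldGroup.mk_snd, SemifieldGroup.mk_thd,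
        SemifieldGroup.mul_fst, SemifieldGroup.mul_snd, SemifieldGroup.mul_thd, S1.mul_zero]
  have hBmul : ∀ b b' : F1, SemifieldGroup.mk S1 0 (b + b') 0
      = SemifieldGroup.mk S1 0 b 0 * SemifieldGroup.mk S1 0 b' 0 := by
    intro b b'
    refine SemifieldGroup.ext ?_ ?_ ?_ <;>
      simp [SemifieldGroup.mk_fst, SemifieldGroup.mk_snd, SemifieldGroup.mk_thd,
        SemifieldGroup.mul_fst, SemifieldGroup.mul_snd, SemifieldGroup.mul_thd, S1.zero_mul]
  set α1 : F1 →+ F2 := AddMonoidHom.mk' (fun a => (φ (SemifieldGroup.mk S1 a 0 0)).1)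
    (by intro a a'
        show (φ (SemifieldGroup.mk S1 (a + a') 0 0)).1
          = (φ (SemifieldGroup.mk S1 a 0 0)).1 + (φ (SemifieldGroup.mk S1 a' 0 0)).1
        rw [hAmul, map_mul, SemifieldGroup.mul_fst]) with hα1
  set α2 : F1 →+ F2 := AddMonoidHom.mk' (fun a => (φ (SemifieldGroup.mk S1 a 0 0)).2.1)
    (by intro a a'
        show (φ (SemifieldGroup.mk S1 (a + a') 0 0)).2.1
          = (φ (SemifieldGroup.mk S1 a 0 0)).2.1 + (φ (SemifieldGroup.mk S1 a' 0 0)).2.1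
        rw [hAmul, map_mul, SemifieldGroup.mul_snd]) with hα2
  set β1 : F1 →+ F2 := AddMonoidHom.mk' (fun b => (φ (SemifieldGroup.mk S1 0 b 0)).1)
    (by intro b b'
        show (φ (SemifieldGroup.mk S1 0 (b + b') 0)).1
          = (φ (SemifieldGroup.mk S1 0 b 0)).1 + (φ (SemifieldGroup.mk S1 0 b' 0)).1
        rw [hBmul, map_mul, SemifieldGroup.mul_fst]) with hβ1
  set β2 : F1 →+ F2 := AddMonoidHom.mk' (fun b => (φ (SemifieldGroup.mk S1 0 b 0)).2.1)
    (by intro b b'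
        show (φ (SemifieldGroup.mk S1 0 (b + b') 0)).2.1
          = (φ (SemifieldGroup.mk S1 0 b 0)).2.1 + (φ (SemifieldGroup.mk S1 0 b' 0)).2.1
        rw [hBmul, map_mul, SemifieldGroup.mul_snd]) with hβ2
  -- the three fundamental equations
  have eq1 : ∀ a b : F1,
      γE (S1.mul a b) = S2.mul (α1 a) (β2 b) - S2.mul (β1 b) (α2 a) := by
    intro a b
    have h := key (SemifieldGroup.mk S1 a 0 0) (SemifieldGroup.mk S1 0 b 0)
    simp only [SemifieldGroup.mk_fst, SemifieldGroup.mk_snd, SemifieldGroup.mk_thd,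
      S1.mul_zero, S1.zero_mul, map_zero, sub_zero] at h
    exact h.symm
  have eq2 : ∀ a a' : F1, S2.mul (α1 a) (α2 a') = S2.mul (α1 a') (α2 a) := by
    intro a a'
    have h := key (SemifieldGroup.mk S1 a 0 0) (SemifieldGroup.mk S1 a' 0 0)
    simp only [SemifieldGroup.mk_fst, SemifieldGroup.mk_snd, SemifieldGroup.mk_thd,
      S1.mul_zero, map_zero, sub_zero, sub_self] at h
    exact sub_eq_zero.mp h
  have eq3 : ∀ b b' : F1, S2.mul (β1 b) (β2 b') = S2.mul (β1 b') (β2 b) := by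
    intro b b'
    have h := key (SemifieldGroup.mk S1 0 b 0) (SemifieldGroup.mk S1 0 b' 0)
    simp only [SemifieldGroup.mk_fst, SemifieldGroup.mk_snd, SemifieldGroup.mk_thd,
      S1.zero_mul, map_zero, sub_zero, sub_self] at h
    exact sub_eq_zero.mp h
  obtain ⟨a0, ha0⟩ := exists_ne (0 : F1)
  -- case distinction
  have C1 : Function.Injective ⇑α1 ∨ Function.Injective ⇑β1 := by
    by_cases h : Function.Injective ⇑α1
    · exact Or.inl h
    · refine Or.inr ?_
      obtain ⟨a, a', heq, hne⟩ := Function.not_injective_iff.mp h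
      have hd : α1 (a - a') = 0 := by rw [map_sub, heq, sub_self]
      have hdne : a - a' ≠ 0 := sub_ne_zero.mpr hne
      intro b b' hbb
      have he : β1 (b - b') = 0 := by rw [map_sub]; rw [show β1 b = β1 b' from hbb, sub_self]
      have h0 : γE (S1.mul (a - a') (b - b')) = 0 := by
        rw [eq1, hd, he, S2.zero_mul, S2.zero_mul, sub_self]
      have h1 : S1.mul (a - a') (b - b') = 0 := by
        apply γE.injective; rw [h0, map_zero]
      rcases S1.eq_zero_or_eq_zero_of_mul_eq_zero _ _ h1 with h' | h'
      · exact absurd h' hdne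
      · exact sub_eq_zero.mp h'
  rcases C1 with hα | hβ
  · -- isotopic case
    left
    have hαbij : Function.Bijective ⇑α1 := bijOf _ hα
    set αe : F1 ≃+ F2 := AddEquiv.ofBijective α1 hαbij with hαe
    have hsym : ∀ (a : F1) (x : F2),
        S2.mul x (α2 a) = S2.mul (α1 a) (α2 (αe.symm x)) := by
      intro a x
      have h := eq2 a (αe.symm x)
      rw [show α1 (αe.symm x) = x from αe.apply_symm_apply x] at h
      exact h.symm
    have main : ∀ a b : F1,
        γE (S1.mul a b) = S2.mul (α1 a) (β2 b - α2 (αe.symm (β1 b))) := by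
      intro a b
      rw [eq1, S2.mul_sub, ← hsym a (β1 b)]
    have hinj' : Function.Injective (fun b => β2 b - α2 (αe.symm (β1 b))) := by
      intro b b' hb
      have hb' : β2 b - α2 (αe.symm (β1 b)) = β2 b' - α2 (αe.symm (β1 b')) := hb
      have hd : ∀ a : F1, S1.mul a (b - b') = 0 := by
        intro a
        have h1 : γE (S1.mul a b) = γE (S1.mul a b') := by rw [main, main, hb']
        have h2 := γE.injective h1
        rw [S1.mul_sub, h2, sub_self]
      rcases S1.eq_zero_or_eq_zero_of_mul_eq_zero _ _ (hd a0) with h' | h'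
      · exact absurd h' ha0
      · exact sub_eq_zero.mp h'
    have hα1a0 : α1 a0 ≠ 0 := fun h => ha0 (hα (by rw [h, map_zero]))
    have hadd' : ∀ b b', β2 (b + b') - α2 (αe.symm (β1 (b + b')))
        = (β2 b - α2 (αe.symm (β1 b))) + (β2 b' - α2 (αe.symm (β1 b'))) := by
      intro b b'
      apply S2.mul_left_injective hα1a0
      rw [← main, S1.mul_add, map_add, main, main, ← S2.mul_add]
    exact ⟨αe, AddEquiv.ofBijective
      (AddMonoidHom.mk' (fun b => β2 b - α2 (αe.symm (β1 b)))
        (by intro b b'; exact hadd' b b')) (bijOf _ hinj'), γE, main⟩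
  · -- anti-isotopic case
    right
    have hβbij : Function.Bijective ⇑β1 := bijOf _ hβ
    set βe : F1 ≃+ F2 := AddEquiv.ofBijective β1 hβbij with hβe
    have hsym : ∀ (b : F1) (x : F2),
        S2.mul x (β2 b) = S2.mul (β1 b) (β2 (βe.symm x)) := by
      intro b x
      have h := eq3 b (βe.symm x)
      rw [show β1 (βe.symm x) = x from βe.apply_symm_apply x] at h
      exact h.symm
    have main : ∀ a b : F1,
        γE (S1.mul a b) = S2.mul (β1 b) (β2 (βe.symm (α1 a)) - α2 a) := by
      intro a b
      rw [eq1, S2.mul_sub, ← hsym b (α1 a)]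
    have hinj' : Function.Injective (fun a => β2 (βe.symm (α1 a)) - α2 a) := by
      intro a a' ha
      have ha' : β2 (βe.symm (α1 a)) - α2 a = β2 (βe.symm (α1 a')) - α2 a' := ha
      have hd : ∀ b : F1, S1.mul (a - a') b = 0 := by
        intro b
        have h1 : γE (S1.mul a b) = γE (S1.mul a' b) := by rw [main, main, ha']
        have h2 := γE.injective h1
        rw [S1.sub_mul, h2, sub_self]
      rcases S1.eq_zero_or_eq_zero_of_mul_eq_zero _ _ (hd a0) with h' | h'
      · exact sub_eq_zero.mp h'
      · exact absurd h' ha0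
    have hβ1a0 : β1 a0 ≠ 0 := fun h => ha0 (hβ (by rw [h, map_zero]))
    have hadd' : ∀ a a', β2 (βe.symm (α1 (a + a'))) - α2 (a + a')
        = (β2 (βe.symm (α1 a)) - α2 a) + (β2 (βe.symm (α1 a')) - α2 a') := by
      intro a a'
      apply S2.mul_left_injective hβ1a0
      rw [← main, S1.add_mul, map_add, main, main, ← S2.mul_add]
    exact ⟨AddEquiv.ofBijective
      (AddMonoidHom.mk' (fun a => β2 (βe.symm (α1 a)) - α2 a)
        (by intro a a'; exact hadd' a a')) (bijOf _ hinj'), βe, γE, main⟩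

end Hard
/-- (Hiramine; Knarr–Stroppel) The semifield groups of two pre-semifields are
isomorphic if and only if the pre-semifields are isotopic or anti-isotopic. -/
theorem semifieldGroup_iso_iff {F1 F2 : Type*} [AddCommGroup F1] [AddCommGroup F2]
    [Finite F1] [Finite F2] [Nontrivial F1] [Nontrivial F2]
    (S1 : PreSemifield F1) (S2 : PreSemifield F2) :
    Nonempty (SemifieldGroup S1 ≃* SemifieldGroup S2) ↔
      S1.Isotopic S2 ∨ S1.AntiIsotopic S2 := by
  constructor
  · rintro ⟨φ⟩
    exact iso_isotopic_or_antiIsotopic φ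
  · rintro (h | h)
    · exact isotopic_nonempty_iso h
    · exact antiIsotopic_nonempty_iso h
end

section
/- Let (F,+,*) be a commutative semifield of order p^a for a prime p, and suppose the middle seminucleus Mid(F) = {z ∈ F : x*(z*y) = (x*z)*y for all x,y ∈ F} has order p^h. Then the number of abelian subgroups of the semifield group G(F) of order |F|^2 equals 1 + p^h. -/
namespace SemifieldGroupCount

open SemifieldGroup

variable {F : Type*} [AddCommGroup F] (S : PreSemifield F)

/-- The middle seminucleus predicate. -/
def Mid (z : F) : Prop := ∀ x y : F, S.mul x (S.mul z y) = S.mul (S.mul x z) y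

lemma mul_left_injective (a : F) (ha : a ≠ 0) : Function.Injective (S.mul a) := by
  intro x y hxy
  have : S.mul a (x - y) = 0 := by
    rw [sub_eq_add_neg, S.mul_add, S.mul_neg, hxy, add_neg_cancel]
  rcases S.eq_zero_or_eq_zero_of_mul_eq_zero _ _ this with h | h
  · exact absurd h ha
  · exact sub_eq_zero.mp h

lemma mul_left_surjective [Finite F] (a : F) (ha : a ≠ 0) :
    Function.Surjective (S.mul a) :=
  Finite.surjective_of_injective (mul_left_injective S a ha)

lemma mul_def (x y : SemifieldGroup S) :
    x * y = ((x.1 + y.1, x.2.1 + y.2.1, x.2.2 + y.2.2 + S.mul x.1 y.2.1) :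
      F × F × F) := rfl

lemma commute_iff (x y : SemifieldGroup S) :
    x * y = y * x ↔ S.mul x.1 y.2.1 = S.mul y.1 x.2.1 := by
  rw [mul_def, mul_def]
  show ((_ : F × F × F) = _) ↔ _
  rw [Prod.ext_iff, Prod.ext_iff]
  constructor
  · rintro ⟨-, -, h3⟩
    rw [add_comm x.2.2 y.2.2] at h3
    exact add_left_cancel h3
  · intro h
    exact ⟨add_comm _ _, add_comm _ _, by rw [h, add_comm x.2.2 y.2.2]⟩

/-- The abelian subgroup `{(0,b,c)}`. -/
def Ainf : Subgroup (SemifieldGroup S) where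
  carrier := {g : F × F × F | g.1 = 0}
  one_mem' := rfl
  mul_mem' := by
    intro x y hx hy
    show x.1 + y.1 = 0
    rw [hx, hy, add_zero]
  inv_mem' := by
    intro x hx
    show -x.1 = 0
    rw [hx, neg_zero]

/-- The abelian subgroup `{(a, z*a, c)}` attached to `z` in the middle seminucleus. -/
def Az (z : F) : Subgroup (SemifieldGroup S) where
  carrier := {g : F × F × F | g.2.1 = S.mul z g.1}
  one_mem' := by
    show (0 : F) = S.mul z 0
    rw [S.mul_zero]
  mul_mem' := by
    intro x y hx hy
    show x.2.1 + y.2.1 = S.mul z (x.1 + y.1)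
    rw [S.mul_add, hx, hy]
  inv_mem' := by
    intro x hx
    show -x.2.1 = S.mul z (-x.1)
    rw [S.mul_neg, hx]

lemma mem_Ainf (g : SemifieldGroup S) : g ∈ Ainf S ↔ g.1 = 0 := Iff.rfl

lemma mem_Az (z : F) (g : SemifieldGroup S) : g ∈ Az S z ↔ g.2.1 = S.mul z g.1 := Iff.rfl

noncomputable def AinfEquiv : (Ainf S) ≃ F × F where
  toFun g := (g.1.2.1, g.1.2.2)
  invFun x := ⟨((0 : F), x.1, x.2), rfl⟩
  left_inv g := by
    apply Subtype.ext
    exact Prod.ext (g.2.symm) rfl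
  right_inv x := rfl

noncomputable def AzEquiv (z : F) : (Az S z) ≃ F × F where
  toFun g := (g.1.1, g.1.2.2)
  invFun x := ⟨(x.1, S.mul z x.1, x.2), rfl⟩
  left_inv g := by
    apply Subtype.ext
    exact Prod.ext rfl (Prod.ext g.2.symm rfl)
  right_inv x := rfl

lemma card_Ainf : Nat.card (Ainf S) = Nat.card F ^ 2 := by
  rw [Nat.card_congr (AinfEquiv S), Nat.card_prod, sq]

lemma card_Az (z : F) : Nat.card (Az S z) = Nat.card F ^ 2 := by
  rw [Nat.card_congr (AzEquiv S z), Nat.card_prod, sq]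

lemma Ainf_isComm : IsMulCommutative (Ainf S) := by
  constructor; constructor
  intro x y
  apply Subtype.ext
  show (x : SemifieldGroup S) * y = y * x
  rw [commute_iff]
  rw [(mem_Ainf S _).mp x.2, (mem_Ainf S _).mp y.2, S.zero_mul, S.zero_mul]

lemma Az_isComm (hcomm : ∀ a b : F, S.mul a b = S.mul b a) (z : F) (hz : Mid S z) :
    IsMulCommutative (Az S z) := by
  constructor; constructor
  intro x y
  apply Subtype.ext
  show (x : SemifieldGroup S) * y = y * x
  rw [commute_iff, (mem_Az S _ _).mp x.2, (mem_Az S _ _).mp y.2]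
  calc S.mul (x : SemifieldGroup S).1 (S.mul z (y : SemifieldGroup S).1)
      = S.mul (S.mul (x : SemifieldGroup S).1 z) (y : SemifieldGroup S).1 := hz _ _
    _ = S.mul (y : SemifieldGroup S).1 (S.mul (x : SemifieldGroup S).1 z) := hcomm _ _
    _ = S.mul (y : SemifieldGroup S).1 (S.mul z (x : SemifieldGroup S).1) := by
        rw [hcomm z _]

/-- First coordinate projection as a group hom. -/
def pi1 : SemifieldGroup S →* Multiplicative F where
  toFun g := Multiplicative.ofAdd g.1
  map_one' := rfl
  map_mul' _ _ := rfl


lemma classify [Finite F] (hcomm : ∀ a b : F, S.mul a b = S.mul b a)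
    (e : F) (he : ∀ x : F, S.mul e x = x ∧ S.mul x e = x)
    (A : Subgroup (SemifieldGroup S)) (hA : IsMulCommutative A)
    (hcard : Nat.card A = Nat.card F ^ 2) :
    A = Ainf S ∨ ∃ z, Mid S z ∧ A = Az S z := by
  haveI := hA
  have hq : 0 < Nat.card F := Nat.card_pos
  have hAc : ∀ x y : SemifieldGroup S, x ∈ A → y ∈ A →
      S.mul x.1 y.2.1 = S.mul y.1 x.2.1 := fun x y hx hy =>
    (commute_iff S x y).mp (Subgroup.mul_comm_of_mem_isMulCommutative (H := A) hx hy)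
  by_cases hex : ∃ w : SemifieldGroup S, w ∈ A ∧ w.1 ≠ 0
  · obtain ⟨w, hwA, hw1⟩ := hex
    set f := (pi1 S).comp A.subtype with hf
    have hker : ∀ g : A, g ∈ f.ker →
        (g : SemifieldGroup S).1 = 0 ∧ (g : SemifieldGroup S).2.1 = 0 := by
      intro g hg
      have h1 : (g : SemifieldGroup S).1 = 0 := by
        have := MonoidHom.mem_ker.mp hg
        exact ofAdd_eq_one.mp this
      refine ⟨h1, ?_⟩
      have h2 := hAc w (g : SemifieldGroup S) hwA g.2
      rw [h1, S.zero_mul] at h2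
      rcases S.eq_zero_or_eq_zero_of_mul_eq_zero _ _ h2 with h | h
      · exact absurd h hw1
      · exact h
    have hkcard : Nat.card f.ker ≤ Nat.card F := by
      apply Nat.card_le_card_of_injective
        (fun g : f.ker => ((g : A) : SemifieldGroup S).2.2)
      intro g g' hgg'
      obtain ⟨h1, h2⟩ := hker _ g.2
      obtain ⟨h1', h2'⟩ := hker _ g'.2
      apply Subtype.ext; apply Subtype.ext
      exact Prod.ext (h1.trans h1'.symm) (Prod.ext (h2.trans h2'.symm) hgg')
    have hcardMF : Nat.card (Multiplicative F) = Nat.card F :=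
      Nat.card_congr ⟨Multiplicative.toAdd, Multiplicative.ofAdd, fun _ => rfl, fun _ => rfl⟩
    have hrange_le : Nat.card f.range ≤ Nat.card F :=
      hcardMF ▸ Subgroup.card_le_card_group f.range
    have hsplit : Nat.card A = Nat.card f.range * Nat.card f.ker := by
      rw [Subgroup.card_eq_card_quotient_mul_card_subgroup f.ker,
        Nat.card_congr (QuotientGroup.quotientKerEquivRange f).toEquiv]
    have hqr : Nat.card F ≤ Nat.card f.range := by
      have h1 : Nat.card F * Nat.card F ≤ Nat.card f.range * Nat.card F := by
        calc Nat.card F * Nat.card F = Nat.card F ^ 2 := (sq (Nat.card F)).symm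
          _ = Nat.card A := hcard.symm
          _ = Nat.card f.range * Nat.card f.ker := hsplit
          _ ≤ Nat.card f.range * Nat.card F := Nat.mul_le_mul_left _ hkcard
      exact Nat.le_of_mul_le_mul_right h1 hq
    have hrange_top : f.range = ⊤ :=
      Subgroup.eq_top_of_card_eq _ (le_antisymm hrange_le (hcardMF ▸ hqr))
    have hsurj : ∀ x : F, ∃ g : SemifieldGroup S, g ∈ A ∧ g.1 = x := by
      intro x
      have hx : Multiplicative.ofAdd x ∈ f.range := hrange_top ▸ Subgroup.mem_top _
      obtain ⟨g, hg⟩ := hx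
      exact ⟨g, g.2, Multiplicative.ofAdd.injective hg⟩
    obtain ⟨g0, hg0A, hg0e⟩ := hsurj e
    set z := g0.2.1 with hz
    have hmemAz : ∀ g : SemifieldGroup S, g ∈ A → g.2.1 = S.mul z g.1 := by
      intro g hg
      have h1 := hAc g0 g hg0A hg
      rw [hg0e, (he _).1] at h1
      rw [h1, hcomm]
    have hzmid : Mid S z := by
      intro x y
      obtain ⟨gx, hgxA, hgx1⟩ := hsurj x
      obtain ⟨gy, hgyA, hgy1⟩ := hsurj y
      have h1 := hAc gx gy hgxA hgyA
      rw [hmemAz gx hgxA, hmemAz gy hgyA, hgx1, hgy1] at h1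
      rw [h1, hcomm y, hcomm z x]
    refine Or.inr ⟨z, hzmid, ?_⟩
    exact Subgroup.eq_of_le_of_card_ge (fun g hg => hmemAz g hg)
      (le_of_eq ((card_Az S z).trans hcard.symm))
  · push_neg at hex
    left
    exact Subgroup.eq_of_le_of_card_ge (fun g hg => hex g hg)
      (le_of_eq ((card_Ainf S).trans hcard.symm))

end SemifieldGroupCount

open SemifieldGroupCount in
/-- (Verardi; Hiramine; Knarr–Stroppel) Let `F` be a commutative semifield of order
`p ^ a` (a commutative pre-semifield with a two-sided multiplicative identity), and
suppose its middle seminucleus `Mid(F) = {z : x*(z*y) = (x*z)*y for all x, y}` has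
order `p ^ h`.  Then the number of abelian subgroups of the semifield group `G(F)`
of order `|F| ^ 2` is `1 + p ^ h`. -/
theorem semifieldGroup_count_abelian_of_commutative {F : Type*} [AddCommGroup F]
    [Finite F] (S : PreSemifield F) (hcomm : ∀ a b : F, S.mul a b = S.mul b a)
    (e : F) (he : ∀ x : F, S.mul e x = x ∧ S.mul x e = x)
    (p a h : ℕ) (hp : p.Prime) (ha : 0 < a) (hFcard : Nat.card F = p ^ a)
    (hmid : Nat.card {z : F // ∀ x y : F, S.mul x (S.mul z y) = S.mul (S.mul x z) y} =
      p ^ h) :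
    Nat.card {A : Subgroup (SemifieldGroup S) // IsMulCommutative A ∧
      Nat.card A = Nat.card F ^ 2} = 1 + p ^ h := by
  classical
  have hq2 : 2 ≤ Nat.card F := by
    rw [hFcard]
    exact Nat.one_lt_pow ha.ne' hp.one_lt
  have he0 : e ≠ 0 := by
    intro h0
    have hall : ∀ x : F, x = 0 := fun x => by rw [← (he x).1, h0, S.zero_mul]
    haveI : Subsingleton F := ⟨fun a b => (hall a).trans (hall b).symm⟩
    haveI : Nonempty F := ⟨e⟩
    have : Nat.card F = 1 := Nat.card_unique
    omega
  haveI : Finite (Subgroup (SemifieldGroup S)) :=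
    Finite.of_injective (fun A => (A : Set (SemifieldGroup S))) SetLike.coe_injective
  set M := {z : F // ∀ x y : F, S.mul x (S.mul z y) = S.mul (S.mul x z) y} with hM
  set fz : M → Subgroup (SemifieldGroup S) := fun z => Az S z.1 with hfz
  have hset : {A : Subgroup (SemifieldGroup S) |
      IsMulCommutative A ∧ Nat.card A = Nat.card F ^ 2} = insert (Ainf S) (Set.range fz) := by
    ext A
    simp only [Set.mem_setOf_eq, Set.mem_insert_iff, Set.mem_range]
    constructor
    · rintro ⟨h1, h2⟩
      rcases classify S hcomm e he A h1 h2 with h | ⟨z, hz, hAz⟩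
      · exact Or.inl h
      · exact Or.inr ⟨⟨z, hz⟩, hAz.symm⟩
    · rintro (rfl | ⟨z, rfl⟩)
      · exact ⟨Ainf_isComm S, card_Ainf S⟩
      · exact ⟨Az_isComm S hcomm z.1 z.2, card_Az S z.1⟩
  have hnotmem : Ainf S ∉ Set.range fz := by
    rintro ⟨z, hz⟩
    have hmem : ((e, S.mul z.1 e, 0) : F × F × F) ∈ Az S z.1 := rfl
    rw [show Az S z.1 = fz z from rfl, hz] at hmem
    exact he0 ((mem_Ainf S _).mp hmem)
  have hinj : Function.Injective fz := by
    intro z w hzw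
    have hmem : ((e, S.mul z.1 e, 0) : F × F × F) ∈ Az S z.1 := rfl
    rw [show Az S z.1 = fz z from rfl, hzw] at hmem
    have h1 : S.mul z.1 e = S.mul w.1 e := (mem_Az S w.1 _).mp hmem
    apply Subtype.ext
    rw [← (he z.1).2, ← (he w.1).2, h1]
  have hcoe : Nat.card {A : Subgroup (SemifieldGroup S) // IsMulCommutative A ∧
      Nat.card A = Nat.card F ^ 2} = ({A : Subgroup (SemifieldGroup S) |
      IsMulCommutative A ∧ Nat.card A = Nat.card F ^ 2}).ncard :=
    Nat.card_coe_set_eq _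
  rw [hcoe, hset, Set.ncard_insert_of_notMem hnotmem (Set.toFinite _),
    ← Nat.card_coe_set_eq, Nat.card_congr (Equiv.ofInjective fz hinj).symm, hmid]
  omega
end
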